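/- arXiv:2408.10977 — 6 statements merged into one kernel-verified Lean document; each statement's English description precedes it below -/
import Mathlib

section
/- Let q be a prime power, n,d ≥ 1, and for each i ∈ [d] fix polynomials h_i ∈ F_q[x_1,...,x_n] and exponent vectors b_i ∈ (Z^+)^n with gcd(b_{i,j}, q-1)=1 for all j. For a_i = (a_{i,1},...,a_{i,n+1}) ∈ F_q^{n+1}, define f_{a_i}(x) = Σ_{j=1}^n a_{i,j} x_j^{b_{i,j}} + a_{i,n+1}, and let V_{a_1,...,a_d} = {(x, h_1(x)+f_{a_1}(x), ..., h_d(x)+f_{a_d}(x)) : x ∈ F_q^n} ⊆ F_q^{n+d}. Then for any two distinct d-tuples (a_1,...,a_d) ≠ (ã_1,...,ã_d) in (F_q^{n+1})^d, the varieties V_{a_1,...,a_d} and V_{ã_1,...,ã_d} are distinct. -/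
/-- Distinct parameter tuples define distinct varieties `V_{a_1,…,a_d}`. -/
theorem stmt_1 {F : Type*} [Field F] [Fintype F] (n d : ℕ) (hn : 1 ≤ n) (hd : 1 ≤ d)
    (h : Fin d → MvPolynomial (Fin n) F)
    (hdeg : ∀ i, (h i).totalDegree ≤ Fintype.card F - 1)
    (b : Fin d → Fin n → ℕ)
    (hb : ∀ i j, 0 < b i j ∧ Nat.Coprime (b i j) (Fintype.card F - 1))
    (a a' : Fin d → (Fin n → F) × F) (hne : a ≠ a') :
    ({p : (Fin n → F) × (Fin d → F) | ∀ i, p.2 i =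
        MvPolynomial.eval p.1 (h i) + (∑ j, (a i).1 j * p.1 j ^ (b i j)) + (a i).2} : Set _)
    ≠ {p : (Fin n → F) × (Fin d → F) | ∀ i, p.2 i =
        MvPolynomial.eval p.1 (h i) + (∑ j, (a' i).1 j * p.1 j ^ (b i j)) + (a' i).2} := by
  intro hset
  apply hne
  funext i
  have key : ∀ x : Fin n → F, (∑ j, (a i).1 j * x j ^ (b i j)) + (a i).2
      = (∑ j, (a' i).1 j * x j ^ (b i j)) + (a' i).2 := by
    intro x
    have hx : ((x, fun i' => MvPolynomial.eval x (h i') +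
        (∑ j, (a i').1 j * x j ^ (b i' j)) + (a i').2) :
        (Fin n → F) × (Fin d → F)) ∈ {p : (Fin n → F) × (Fin d → F) | ∀ i, p.2 i =
        MvPolynomial.eval p.1 (h i) + (∑ j, (a i).1 j * p.1 j ^ (b i j)) + (a i).2} := by
      intro i'; rfl
    rw [hset] at hx
    have := hx i
    simp only at this
    linear_combination this
  have hc : (a i).2 = (a' i).2 := by
    have h0 : ∀ j, (0:F) ^ b i j = 0 := fun j => zero_pow (hb i j).1.ne'
    simpa [h0] using key 0
  have hcoef : ∀ j, (a i).1 j = (a' i).1 j := by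
    intro j
    have := key (Pi.single j 1)
    have hs : ∀ (c : Fin n → F), (∑ j', c j' * (Pi.single j 1 : Fin n → F) j' ^ (b i j'))
        = c j := by
      intro c
      rw [Finset.sum_eq_single j]
      · simp
      · intro j' _ hj'
        simp [Pi.single_apply, hj', zero_pow (hb i j').1.ne']
      · simp
    rw [hs, hs, hc] at this
    exact add_right_cancel this
  exact Prod.ext (funext hcoef) hc
end

section
/- Let u, v ∈ F_q^{n+d} be two points, and let A_{u,v} denote the number of tuples (a_1,...,a_d) ∈ (F_q^{n+1})^d such that both u and v lie on V_{a_1,...,a_d}. Then A_{u,v} = q^{dn} if u = v; A_{u,v} = q^{d(n-1)} if the projections of u and v onto the first n coordinates differ; and A_{u,v} = 0 if u ≠ v but their first n coordinates agree. -/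
section helpers
variable {F : Type*} [Field F] [Fintype F]

lemma pow_inj_of_coprime {k : ℕ} (hk : 0 < k) (hc : k.Coprime (Fintype.card F - 1)) :
    Function.Injective (fun x : F => x ^ k) := by
  intro x y hxy
  simp only at hxy
  rcases eq_or_ne x 0 with rfl | hx
  · rcases eq_or_ne y 0 with rfl | hy
    · rfl
    · exfalso; rw [zero_pow hk.ne'] at hxy
      exact hy (pow_eq_zero_iff hk.ne' |>.mp hxy.symm)
  · rcases eq_or_ne y 0 with rfl | hy
    · exfalso; rw [zero_pow hk.ne'] at hxy
      exact hx (pow_eq_zero_iff hk.ne' |>.mp hxy)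
    · have hcard : (Nat.card Fˣ).Coprime k := by
        rw [Nat.card_units, Nat.card_eq_fintype_card]
        exact hc.symm
      have := (powCoprime hcard).injective (a₁ := Units.mk0 x hx) (a₂ := Units.mk0 y hy) ?_
      · exact congrArg Units.val this
      · ext; simpa [powCoprime] using hxy

lemma card_affine (n : ℕ) (w : Fin n → F) (j0 : Fin n) (hw : w j0 ≠ 0) (t : F) :
    Nat.card {c : Fin n → F | ∑ j, w j * c j = t} = Fintype.card F ^ (n - 1) := by
  classical
  let φ : (Fin n → F) →ₗ[F] F :=
    { toFun := fun c => ∑ j, w j * c j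
      map_add' := by intros; simp [mul_add, Finset.sum_add_distrib]
      map_smul' := by intros; simp [Finset.mul_sum, mul_left_comm] }
  have hsurj : Function.Surjective φ := by
    intro s
    refine ⟨Pi.single j0 ((w j0)⁻¹ * s), ?_⟩
    have hφ : ∀ c, φ c = ∑ j, w j * c j := fun c => rfl
    rw [hφ, Finset.sum_eq_single j0]
    · rw [Pi.single_eq_same]; field_simp
    · intro j _ hj; simp [Pi.single_eq_of_ne hj]
    · simp
  obtain ⟨c0, hc0⟩ := hsurj t
  have e : {c : Fin n → F | ∑ j, w j * c j = t} ≃ LinearMap.ker φ := by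
    refine ⟨fun x => ⟨x.1 - c0, ?_⟩, fun y => ⟨y.1 + c0, ?_⟩, fun x => by simp, fun y => by simp⟩
    · have hx : φ x.1 = t := x.2
      simp [LinearMap.mem_ker, hx, hc0]
    · have hy : φ y.1 = 0 := y.2
      show φ (y.1 + c0) = t
      simp [hy, hc0]
  rw [Nat.card_congr e]
  have : Fintype ↥(LinearMap.ker φ) := Fintype.ofFinite _
  rw [Nat.card_eq_fintype_card, Module.card_eq_pow_finrank (K := F)]
  congr 1
  have h1 := LinearMap.finrank_range_add_finrank_ker φ
  rw [LinearMap.range_eq_top.mpr hsurj, finrank_top, Module.finrank_self,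
    Module.finrank_fin_fun] at h1
  omega

lemma card_one_eq (n : ℕ) (g : Fin n → F) (r : F) :
    Nat.card {x : (Fin n → F) × F | r = (∑ j, x.1 j * g j) + x.2} = Fintype.card F ^ n := by
  have e : {x : (Fin n → F) × F | r = (∑ j, x.1 j * g j) + x.2} ≃ (Fin n → F) := by
    refine ⟨fun x => x.1.1, fun c => ⟨(c, r - ∑ j, c j * g j), by simp⟩, fun x => ?_, fun c => rfl⟩
    refine Subtype.ext (Prod.ext rfl ?_)
    have hx : r = (∑ j, x.1.1 j * g j) + x.1.2 := x.2
    show r - ∑ j, x.1.1 j * g j = x.1.2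
    linear_combination hx
  rw [Nat.card_congr e, Nat.card_eq_fintype_card, Fintype.card_fun, Fintype.card_fin]

lemma card_two_eq (n : ℕ) (g1 g2 : Fin n → F) (r1 r2 : F) (j0 : Fin n) (hne : g1 j0 ≠ g2 j0) :
    Nat.card {x : (Fin n → F) × F |
        r1 = (∑ j, x.1 j * g1 j) + x.2 ∧ r2 = (∑ j, x.1 j * g2 j) + x.2}
      = Fintype.card F ^ (n - 1) := by
  have key : ∀ c : Fin n → F,
      ∑ j, (g1 j - g2 j) * c j = (∑ j, c j * g1 j) - ∑ j, c j * g2 j := fun c => by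
    rw [← Finset.sum_sub_distrib]; exact Finset.sum_congr rfl fun j _ => by ring
  have e : {x : (Fin n → F) × F |
        r1 = (∑ j, x.1 j * g1 j) + x.2 ∧ r2 = (∑ j, x.1 j * g2 j) + x.2}
      ≃ {c : Fin n → F | ∑ j, (g1 j - g2 j) * c j = r1 - r2} := by
    refine ⟨fun x => ⟨x.1.1, ?_⟩, fun c => ⟨(c.1, r1 - ∑ j, c.1 j * g1 j), ?_, ?_⟩,
      fun x => ?_, fun c => rfl⟩
    · obtain ⟨h1, h2⟩ := x.2
      show ∑ j, (g1 j - g2 j) * x.1.1 j = r1 - r2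
      rw [key]; linear_combination h2 - h1
    · show r1 = (∑ j, c.1 j * g1 j) + (r1 - ∑ j, c.1 j * g1 j); ring
    · have hc : ∑ j, (g1 j - g2 j) * c.1 j = r1 - r2 := c.2
      show r2 = (∑ j, c.1 j * g2 j) + (r1 - ∑ j, c.1 j * g1 j)
      linear_combination hc - key c.1
    · obtain ⟨h1, h2⟩ := x.2
      refine Subtype.ext (Prod.ext rfl ?_)
      show r1 - ∑ j, x.1.1 j * g1 j = x.1.2
      linear_combination h1
  rw [Nat.card_congr e]
  exact card_affine n _ j0 (sub_ne_zero.mpr hne) (r1 - r2)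

end helpers

lemma card_forall_pair {α : Type*} (d : ℕ) (P Q : Fin d → α → Prop) :
    Nat.card {a : Fin d → α | (∀ i, P i (a i)) ∧ (∀ i, Q i (a i))}
      = ∏ i, Nat.card {x : α | P i x ∧ Q i x} := by
  rw [← Nat.card_pi]
  exact Nat.card_congr ((Equiv.subtypeEquivRight
    (q := fun a : Fin d → α => ∀ i, P i (a i) ∧ Q i (a i)) (fun a => (forall_and).symm)).trans
    (Equiv.subtypePiEquivPi (p := fun i x => P i x ∧ Q i x)))



/-- The number `A_{u,v}` of parameter tuples `(a_1,…,a_d)` whose variety contains both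
`u` and `v` is `q^{dn}` if `u = v`, `q^{d(n-1)}` if `u|_{[n]} ≠ v|_{[n]}`, and `0`
if `u ≠ v` but `u|_{[n]} = v|_{[n]}`. -/
theorem stmt_3 {F : Type*} [Field F] [Fintype F] (n d : ℕ) (hn : 1 ≤ n) (hd : 1 ≤ d)
    (h : Fin d → MvPolynomial (Fin n) F)
    (hdeg : ∀ i, (h i).totalDegree ≤ Fintype.card F - 1)
    (b : Fin d → Fin n → ℕ)
    (hb : ∀ i j, 0 < b i j ∧ Nat.Coprime (b i j) (Fintype.card F - 1))
    (u v : (Fin n → F) × (Fin d → F)) :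
    (u = v →
      Nat.card {a : Fin d → (Fin n → F) × F |
          (∀ i, u.2 i = MvPolynomial.eval u.1 (h i) + (∑ j, (a i).1 j * u.1 j ^ (b i j)) + (a i).2) ∧
          (∀ i, v.2 i = MvPolynomial.eval v.1 (h i) + (∑ j, (a i).1 j * v.1 j ^ (b i j)) + (a i).2)}
        = Fintype.card F ^ (d * n)) ∧
    (u.1 ≠ v.1 →
      Nat.card {a : Fin d → (Fin n → F) × F |
          (∀ i, u.2 i = MvPolynomial.eval u.1 (h i) + (∑ j, (a i).1 j * u.1 j ^ (b i j)) + (a i).2) ∧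
          (∀ i, v.2 i = MvPolynomial.eval v.1 (h i) + (∑ j, (a i).1 j * v.1 j ^ (b i j)) + (a i).2)}
        = Fintype.card F ^ (d * (n - 1))) ∧
    (u ≠ v → u.1 = v.1 →
      Nat.card {a : Fin d → (Fin n → F) × F |
          (∀ i, u.2 i = MvPolynomial.eval u.1 (h i) + (∑ j, (a i).1 j * u.1 j ^ (b i j)) + (a i).2) ∧
          (∀ i, v.2 i = MvPolynomial.eval v.1 (h i) + (∑ j, (a i).1 j * v.1 j ^ (b i j)) + (a i).2)}
        = 0) := by
  refine ⟨?_, ?_, ?_⟩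
  · rintro rfl
    rw [card_forall_pair (α := (Fin n → F) × F) d
      (fun i x => u.2 i = MvPolynomial.eval u.1 (h i) + (∑ j, x.1 j * u.1 j ^ (b i j)) + x.2)
      (fun i x => u.2 i = MvPolynomial.eval u.1 (h i) + (∑ j, x.1 j * u.1 j ^ (b i j)) + x.2)]
    have hfac : ∀ i : Fin d,
        Nat.card {x : (Fin n → F) × F |
          (u.2 i = MvPolynomial.eval u.1 (h i) + (∑ j, x.1 j * u.1 j ^ (b i j)) + x.2) ∧
          (u.2 i = MvPolynomial.eval u.1 (h i) + (∑ j, x.1 j * u.1 j ^ (b i j)) + x.2)}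
        = Fintype.card F ^ n := by
      intro i
      rw [Nat.card_congr (Equiv.subtypeEquivRight
        (q := fun x : (Fin n → F) × F =>
          u.2 i - MvPolynomial.eval u.1 (h i) = (∑ j, x.1 j * u.1 j ^ (b i j)) + x.2)
        (fun x => by
          constructor
          · rintro ⟨h1, -⟩; linear_combination h1
          · intro h1; exact ⟨by linear_combination h1, by linear_combination h1⟩))]
      exact card_one_eq n _ _
    rw [Finset.prod_congr rfl (fun i _ => hfac i), Finset.prod_const, Finset.card_univ,
      Fintype.card_fin, ← pow_mul, Nat.mul_comm]
  · intro hne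
    obtain ⟨j0, hj0⟩ := Function.ne_iff.mp hne
    rw [card_forall_pair (α := (Fin n → F) × F) d
      (fun i x => u.2 i = MvPolynomial.eval u.1 (h i) + (∑ j, x.1 j * u.1 j ^ (b i j)) + x.2)
      (fun i x => v.2 i = MvPolynomial.eval v.1 (h i) + (∑ j, x.1 j * v.1 j ^ (b i j)) + x.2)]
    have hfac : ∀ i : Fin d,
        Nat.card {x : (Fin n → F) × F |
          (u.2 i = MvPolynomial.eval u.1 (h i) + (∑ j, x.1 j * u.1 j ^ (b i j)) + x.2) ∧
          (v.2 i = MvPolynomial.eval v.1 (h i) + (∑ j, x.1 j * v.1 j ^ (b i j)) + x.2)}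
        = Fintype.card F ^ (n - 1) := by
      intro i
      rw [Nat.card_congr (Equiv.subtypeEquivRight
        (q := fun x : (Fin n → F) × F =>
          (u.2 i - MvPolynomial.eval u.1 (h i) = (∑ j, x.1 j * u.1 j ^ (b i j)) + x.2) ∧
          (v.2 i - MvPolynomial.eval v.1 (h i) = (∑ j, x.1 j * v.1 j ^ (b i j)) + x.2))
        (fun x => by
          constructor
          · rintro ⟨h1, h2⟩; exact ⟨by linear_combination h1, by linear_combination h2⟩
          · rintro ⟨h1, h2⟩; exact ⟨by linear_combination h1, by linear_combination h2⟩))]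
      refine card_two_eq n _ _ _ _ j0 ?_
      intro hcontra
      exact hj0 (pow_inj_of_coprime (hb i j0).1 (hb i j0).2 hcontra)
    rw [Finset.prod_congr rfl (fun i _ => hfac i), Finset.prod_const, Finset.card_univ,
      Fintype.card_fin, ← pow_mul, Nat.mul_comm]
  · intro hneq heq1
    have : ∃ i, u.2 i ≠ v.2 i := by
      by_contra hcontra
      push_neg at hcontra
      exact hneq (Prod.ext heq1 (funext hcontra))
    obtain ⟨i0, hi0⟩ := this
    rw [Nat.card_eq_zero]
    left
    constructor
    rintro ⟨a, h1, h2⟩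
    apply hi0
    rw [h1 i0, h2 i0, heq1]
end

section
/- Fix (a_1,...,a_d) ∈ (F_q^{n+1})^d. The sum λ = Σ_{y ∈ F_q^n} Π_{i=1}^d Γ_i(y), where Γ_i(y) = Σ_{ã ∈ F_q^{n+1}, ⟨ã,(y,1)⟩=0} e(Tr(⟨a_i,ã⟩)), equals q^{(d+1)n} if all a_i = 0; equals q^{dn} if there exist y ∈ F_q^n and (c_1,...,c_d) ∈ F_q^d \ {0} with a_i = c_i(y,1) for all i; and equals 0 otherwise. -/
open Finset

private lemma addchar_map_sum {A : Type*} [AddCommMonoid A] (ψ : AddChar A ℂ)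
    {ι : Type*} (s : Finset ι) (f : ι → A) :
    ψ (∑ i ∈ s, f i) = ∏ i ∈ s, ψ (f i) := by
  induction s using Finset.cons_induction with
  | empty => simp
  | cons i s hi ih => rw [Finset.sum_cons, Finset.prod_cons, AddChar.map_add_eq_mul, ih]

private lemma sum_linear {F : Type*} [Field F] [Fintype F] [DecidableEq F]
    {ψ : AddChar F ℂ} (hψ : ψ.IsPrimitive) {n : ℕ} (b : Fin n → F) :
    ∑ u : Fin n → F, ψ (∑ j, b j * u j) =
      if b = 0 then (Fintype.card F : ℂ) ^ n else 0 := by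
  have h1 : ∀ u : Fin n → F, ψ (∑ j, b j * u j) = ∏ j, ψ (b j * u j) := fun u =>
    addchar_map_sum ψ _ _
  simp_rw [h1]
  have key := Finset.sum_prod_piFinset (ι := Fin n)
    (Finset.univ : Finset F) (fun j x => ψ (b j * x))
  rw [← Fintype.piFinset_univ, key]
  have h2 : ∀ j : Fin n, (∑ x : F, ψ (b j * x)) =
      if b j = 0 then (Fintype.card F : ℂ) else 0 := by
    intro j
    simp_rw [mul_comm (b j)]
    rw [AddChar.sum_mulShift (b j) hψ]
    split_ifs <;> simp
  simp_rw [h2]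
  by_cases hb : b = 0
  · simp [hb]
  · obtain ⟨j, hj⟩ := Function.ne_iff.mp hb
    rw [if_neg hb]
    exact Finset.prod_eq_zero (Finset.mem_univ j) (if_neg hj)

private lemma hyperplane_sum {F : Type*} [Field F] [Fintype F] [DecidableEq F]
    {ψ : AddChar F ℂ} (hψ : ψ.IsPrimitive) {n : ℕ} (v : (Fin n → F) × F)
    (y : Fin n → F) :
    ∑ t ∈ Finset.univ.filter
        (fun t : (Fin n → F) × F => (∑ j, t.1 j * y j) + t.2 = 0),
      ψ ((∑ j, v.1 j * t.1 j) + v.2 * t.2)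
    = if v.1 = v.2 • y then (Fintype.card F : ℂ) ^ n else 0 := by
  have himg : Finset.univ.filter
      (fun t : (Fin n → F) × F => (∑ j, t.1 j * y j) + t.2 = 0)
      = Finset.univ.image (fun u : Fin n → F => (u, -∑ j, u j * y j)) := by
    ext t
    simp only [Finset.mem_filter, Finset.mem_univ, true_and, Finset.mem_image,
      Prod.ext_iff]
    constructor
    · intro h
      exact ⟨t.1, rfl, (eq_neg_of_add_eq_zero_right h).symm⟩
    · rintro ⟨u, hu1, hu2⟩
      rw [← hu1, ← hu2]
      simp
  have hinj : Set.InjOn (fun u : Fin n → F => (u, -∑ j, u j * y j)) ↑(Finset.univ : Finset (Fin n → F)) := by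
    intro u _ u' _ h
    exact congrArg Prod.fst h
  rw [himg, Finset.sum_image hinj]
  have hexpr : ∀ u : Fin n → F,
      (∑ j, v.1 j * u j) + v.2 * -(∑ j, u j * y j)
        = ∑ j, (v.1 j - v.2 * y j) * u j := by
    intro u
    rw [mul_neg, Finset.mul_sum, ← sub_eq_add_neg, ← Finset.sum_sub_distrib]
    exact Finset.sum_congr rfl fun j _ => by ring
  simp_rw [hexpr]
  rw [sum_linear hψ]
  congr 1
  simp only [eq_iff_iff]
  constructor
  · intro h
    funext j
    have := congrFun h j
    simp only [Pi.zero_apply, sub_eq_zero] at this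
    simpa [Pi.smul_apply, smul_eq_mul] using this
  · intro h
    funext j
    have := congrFun h j
    simp only [Pi.smul_apply, smul_eq_mul] at this
    simp [this]

/-- For a fixed tuple `(a_1,…,a_d)`, the sum `λ = Σ_y Π_i Γ_i(y)` equals `q^{(d+1)n}`
if all `a_i = 0`; equals `q^{dn}` if `a_i = c_i(y,1)` for some `y` and some nonzero
`(c_1,…,c_d)`; and equals `0` otherwise. -/
theorem stmt_10 (p : ℕ) [Fact p.Prime] {F : Type*} [Field F] [Fintype F] [DecidableEq F]
    [Algebra (ZMod p) F] (n d : ℕ) (hn : 1 ≤ n) (hd : 1 ≤ d)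
    (e : ZMod p → ℂ) (he : ∀ x : ZMod p, e x = Complex.exp (2 * Real.pi * Complex.I * x.val / p))
    (a : Fin d → (Fin n → F) × F)
    (Γ : Fin d → (Fin n → F) → ℂ)
    (hΓ : ∀ i y, Γ i y =
      ∑ t ∈ Finset.univ.filter
          (fun t : (Fin n → F) × F => (∑ j, t.1 j * y j) + t.2 = 0),
        e (Algebra.trace (ZMod p) F ((∑ j, (a i).1 j * t.1 j) + (a i).2 * t.2))) :
    ((∀ i, a i = 0) →
      ∑ y : Fin n → F, ∏ i, Γ i y = (Fintype.card F : ℂ) ^ ((d + 1) * n)) ∧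
    ((∃ (y : Fin n → F) (c : Fin d → F), c ≠ 0 ∧ ∀ i, a i = (c i • y, c i)) →
      ∑ y : Fin n → F, ∏ i, Γ i y = (Fintype.card F : ℂ) ^ (d * n)) ∧
    (¬ (∀ i, a i = 0) →
      ¬ (∃ (y : Fin n → F) (c : Fin d → F), c ≠ 0 ∧ ∀ i, a i = (c i • y, c i)) →
      ∑ y : Fin n → F, ∏ i, Γ i y = 0) := by
  have hp : p ≠ 0 := (Fact.out : p.Prime).ne_zero
  have hp1 : 1 < p := (Fact.out : p.Prime).one_lt
  -- the primitive root of unity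
  have hroot : IsPrimitiveRoot (Complex.exp (2 * Real.pi * Complex.I / p)) p :=
    Complex.isPrimitiveRoot_exp p hp
  have hζ : (Complex.exp (2 * Real.pi * Complex.I / p)) ^ p = 1 := hroot.pow_eq_one
  haveI : NeZero p := ⟨hp⟩
  -- the additive character
  set ψ : AddChar F ℂ :=
    (AddChar.zmodChar p hζ).compAddMonoidHom (Algebra.trace (ZMod p) F).toAddMonoidHom
    with hψdef
  have hψ_apply : ∀ x : F, ψ x = e (Algebra.trace (ZMod p) F x) := by
    intro x
    rw [hψdef, AddChar.compAddMonoidHom_apply, LinearMap.toAddMonoidHom_coe,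
      AddChar.zmodChar_apply, he]
    rw [← Complex.exp_nat_mul]
    congr 1
    field_simp
  have hψne : ψ ≠ 1 := by
    obtain ⟨x, hx⟩ := Algebra.trace_surjective (ZMod p) F 1
    intro hcon
    have h1 : ψ x = 1 := by rw [hcon]; rfl
    rw [hψdef, AddChar.compAddMonoidHom_apply, LinearMap.toAddMonoidHom_coe, hx,
      AddChar.zmodChar_apply, ZMod.val_one p, pow_one] at h1
    exact hroot.ne_one hp1 h1
  have hprim : ψ.IsPrimitive := AddChar.IsPrimitive.of_ne_one hψne
  set q : ℂ := (Fintype.card F : ℂ) with hq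
  -- the key formula for Γ
  have hΓ' : ∀ i y, Γ i y = if (a i).1 = (a i).2 • y then q ^ n else 0 := by
    intro i y
    rw [hΓ i y, ← hyperplane_sum hprim (a i) y]
    exact Finset.sum_congr rfl fun t _ => (hψ_apply _).symm
  have hprod : ∀ y, ∏ i, Γ i y =
      if (∀ i, (a i).1 = (a i).2 • y) then q ^ (d * n) else 0 := by
    intro y
    simp_rw [hΓ' _ y]
    by_cases h : ∀ i, (a i).1 = (a i).2 • y
    · rw [if_pos h]
      have : ∀ i : Fin d, (if (a i).1 = (a i).2 • y then q ^ n else 0) = q ^ n :=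
        fun i => if_pos (h i)
      simp_rw [this]
      rw [Finset.prod_const, Finset.card_univ, Fintype.card_fin, ← pow_mul, mul_comm n d]
    · rw [if_neg h]
      push_neg at h
      obtain ⟨i, hi⟩ := h
      exact Finset.prod_eq_zero (Finset.mem_univ i) (if_neg hi)
  have hcardfun : (Fintype.card (Fin n → F) : ℂ) = q ^ n := by
    rw [Fintype.card_fun, Fintype.card_fin]
    push_cast
    rfl
  refine ⟨?_, ?_, ?_⟩
  · -- all zero case
    intro h0
    have hcond : ∀ y : Fin n → F, ∀ i, (a i).1 = (a i).2 • y := by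
      intro y i
      rw [h0 i]
      simp
    simp_rw [hprod]
    have : ∀ y : Fin n → F,
        (if (∀ i, (a i).1 = (a i).2 • y) then q ^ (d * n) else 0) = q ^ (d * n) :=
      fun y => if_pos (hcond y)
    simp_rw [this]
    rw [Finset.sum_const, Finset.card_univ, nsmul_eq_mul, hcardfun, ← pow_add]
    congr 1
    ring
  · -- proportional case
    rintro ⟨y₀, c, hc, hac⟩
    obtain ⟨j, hj⟩ := Function.ne_iff.mp hc
    have hcond : ∀ y : Fin n → F, (∀ i, (a i).1 = (a i).2 • y) ↔ y = y₀ := by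
      intro y
      constructor
      · intro h
        have := h j
        rw [hac j] at this
        simp only at this
        exact (smul_right_injective (Fin n → F) hj this).symm
      · rintro rfl
        intro i
        rw [hac i]
    simp_rw [hprod]
    calc ∑ y : Fin n → F,
          (if (∀ i, (a i).1 = (a i).2 • y) then q ^ (d * n) else 0)
        = ∑ y : Fin n → F, (if y = y₀ then q ^ (d * n) else 0) :=
          Finset.sum_congr rfl fun y _ => by rw [if_congr (hcond y) rfl rfl]
      _ = q ^ (d * n) := by rw [Finset.sum_ite_eq' Finset.univ y₀, if_pos (Finset.mem_univ y₀)]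
  · -- remaining case
    intro h1 h2
    have hcond : ∀ y : Fin n → F, ¬ (∀ i, (a i).1 = (a i).2 • y) := by
      intro y hy
      set c : Fin d → F := fun i => (a i).2 with hcdef
      have hac : ∀ i, a i = (c i • y, c i) := by
        intro i
        exact Prod.ext (hy i) rfl
      by_cases hc : c = 0
      · apply h1
        intro i
        have hci : c i = 0 := by rw [hc]; rfl
        rw [hac i, hci]
        simp
      · exact h2 ⟨y, c, hc, hac⟩
    simp_rw [hprod]
    have : ∀ y : Fin n → F,
        (if (∀ i, (a i).1 = (a i).2 • y) then q ^ (d * n) else 0) = 0 :=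
      fun y => if_neg (hcond y)
    simp_rw [this]
    exact Finset.sum_const_zero
end

section
/- Let V ⊆ (F_q^{n+1})^d be a set of d-tuples (each representing a variety). Then the squared norm of the projection of the indicator vector 1_V onto the span of the normalized characters χ_{(y,c)}/q^{d(n+1)/2}, where χ_{(y,c)} = χ_{a_1,...,a_d} with a_i = c_i(y,1), over all y ∈ F_q^n and c ∈ F_q^d \ {0}, is at most (|V|/q^{(d-1)n}) · (1 − 1/q + |V|(q^{d-1}−1)/q^d). -/
set_option linter.unusedSectionVars false
set_option maxHeartbeats 1600000

section StmtAux

variable (p : ℕ) [Fact p.Prime] (e : ZMod p → ℂ)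
  (he : ∀ x : ZMod p, e x = Complex.exp (2 * Real.pi * Complex.I * x.val / p))
  {F : Type*} [Field F] [Fintype F] [DecidableEq F] [Algebra (ZMod p) F]

include he

lemma aux_e_zero : e 0 = 1 := by simp [he]

lemma aux_e_zeta (x : ZMod p) :
    e x = Complex.exp (2 * Real.pi * Complex.I / p) ^ x.val := by
  rw [he, ← Complex.exp_nat_mul]
  congr 1
  ring

lemma aux_e_add (s t : ZMod p) : e (s + t) = e s * e t := by
  have hp0 : p ≠ 0 := (Fact.out : p.Prime).ne_zero
  have hp : (p : ℂ) ≠ 0 := Nat.cast_ne_zero.mpr hp0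
  haveI : NeZero p := ⟨hp0⟩
  set ζ : ℂ := Complex.exp (2 * Real.pi * Complex.I / p) with hζ
  have hζp : ζ ^ p = 1 := by
    rw [hζ, ← Complex.exp_nat_mul, mul_div_cancel₀ _ hp, Complex.exp_two_pi_mul_I]
  have h1 : (s + t).val + p * ((s.val + t.val) / p) = s.val + t.val := by
    rw [ZMod.val_add]; exact Nat.mod_add_div _ _
  rw [aux_e_zeta p e he, aux_e_zeta p e he, aux_e_zeta p e he, ← pow_add, ← h1,
    pow_add, pow_mul, hζp, one_pow, mul_one]

lemma aux_e_ne_one {t : ZMod p} (ht : t ≠ 0) : e t ≠ 1 := by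
  have hp0 : p ≠ 0 := (Fact.out : p.Prime).ne_zero
  haveI : NeZero p := ⟨hp0⟩
  have hp : (p : ℂ) ≠ 0 := Nat.cast_ne_zero.mpr hp0
  rw [he]
  intro h
  obtain ⟨k, hk⟩ := Complex.exp_eq_one_iff.mp h
  have h2 : (2 * (Real.pi : ℂ) * Complex.I) ≠ 0 := by
    simp [Real.pi_ne_zero, Complex.I_ne_zero]
  have h3 : (2 * (Real.pi : ℂ) * Complex.I) * ((t.val : ℂ) / p) =
      (2 * (Real.pi : ℂ) * Complex.I) * k := by
    linear_combination hk
  have h4 : ((t.val : ℂ) / p) = k := mul_left_cancel₀ h2 h3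
  have h5 : (t.val : ℂ) = k * p := (div_eq_iff hp).mp h4
  have h6 : (t.val : ℤ) = k * p := by exact_mod_cast h5
  have h7 : (p : ℤ) ∣ (t.val : ℤ) := ⟨k, by linarith⟩
  have h8 : p ∣ t.val := Int.ofNat_dvd.mp (by exact_mod_cast h7)
  have h10 : t.val = 0 := Nat.eq_zero_of_dvd_of_lt h8 (ZMod.val_lt t)
  exact ht ((ZMod.val_eq_zero t).mp h10)

lemma aux_e_conj (t : ZMod p) : (starRingEnd ℂ) (e t) = e (-t) := by
  have habs : ‖e t‖ = 1 := by
    rw [he]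
    have : (2 * (Real.pi : ℂ) * Complex.I * (t.val : ℂ) / p) =
        Complex.I * ((2 * Real.pi * t.val / p : ℝ) : ℂ) := by push_cast; ring
    rw [this, Complex.norm_exp, Complex.mul_re]
    simp
  have hmul : e t * e (-t) = 1 := by
    rw [← aux_e_add p e he, add_neg_cancel, aux_e_zero p e he]
  have hinv : e (-t) = (e t)⁻¹ := eq_inv_of_mul_eq_one_left (by rw [mul_comm]; exact hmul)
  rw [hinv, Complex.inv_def, Complex.normSq_eq_norm_sq, habs]
  simp

lemma aux_e_sum {ι : Type*} (s : Finset ι) (f : ι → ZMod p) :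
    e (∑ i ∈ s, f i) = ∏ i ∈ s, e (f i) := by
  induction s using Finset.cons_induction with
  | empty => simpa using aux_e_zero p e he
  | cons a s ha ih => rw [Finset.sum_cons, Finset.prod_cons, aux_e_add p e he, ih]

lemma aux_orth (x : F) :
    ∑ t : F, e (Algebra.trace (ZMod p) F (t * x)) =
      if x = 0 then (Fintype.card F : ℂ) else 0 := by
  by_cases hx : x = 0
  · simp [hx, aux_e_zero p e he]
  · rw [if_neg hx]
    obtain ⟨b, hb⟩ : ∃ b : F, Algebra.trace (ZMod p) F (b * x) ≠ 0 := by
      have htr := (traceForm_nondegenerate (ZMod p) F).1 x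
      simp_rw [Algebra.traceForm_apply] at htr
      by_contra! hf
      exact hx (htr (fun y => by rw [mul_comm]; exact hf y))
    set S : ℂ := ∑ t : F, e (Algebra.trace (ZMod p) F (t * x)) with hS
    have hre : ∑ t : F, e (Algebra.trace (ZMod p) F ((b + t) * x)) = S :=
      Fintype.sum_equiv (Equiv.addLeft b)
        (fun t => e (Algebra.trace (ZMod p) F ((b + t) * x)))
        (fun t => e (Algebra.trace (ZMod p) F (t * x))) (fun t => rfl)
    have key : e (Algebra.trace (ZMod p) F (b * x)) * S = S := by
      rw [hS, Finset.mul_sum]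
      rw [show ∑ t : F, e (Algebra.trace (ZMod p) F (b * x)) *
            e (Algebra.trace (ZMod p) F (t * x)) =
          ∑ t : F, e (Algebra.trace (ZMod p) F ((b + t) * x)) from
        Finset.sum_congr rfl fun t _ => by
          rw [← aux_e_add p e he]
          congr 1
          rw [← map_add]
          congr 1
          ring]
      exact hre
    have h0 : (e (Algebra.trace (ZMod p) F (b * x)) - 1) * S = 0 := by
      rw [sub_mul, one_mul, key, sub_self]
    exact (mul_eq_zero.mp h0).resolve_left (sub_ne_zero.mpr (aux_e_ne_one p e he hb))

lemma aux_orth_vec (d : ℕ) (v : Fin d → F) :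
    ∑ c : Fin d → F, e (Algebra.trace (ZMod p) F (∑ i, c i * v i)) =
      if v = 0 then ((Fintype.card F : ℂ)) ^ d else 0 := by
  have step1 : ∀ c : Fin d → F,
      e (Algebra.trace (ZMod p) F (∑ i, c i * v i)) =
        ∏ i, e (Algebra.trace (ZMod p) F (c i * v i)) := by
    intro c
    rw [map_sum, aux_e_sum p e he]
  rw [Finset.sum_congr rfl fun c _ => step1 c]
  rw [show (∑ c : Fin d → F, ∏ i, e (Algebra.trace (ZMod p) F (c i * v i))) =
      ∏ i, ∑ x : F, e (Algebra.trace (ZMod p) F (x * v i)) from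
    (Fintype.prod_sum (fun i x => e (Algebra.trace (ZMod p) F (x * v i)))).symm]
  rw [Finset.prod_congr rfl fun i _ => aux_orth p e he (v i)]
  by_cases hv : v = 0
  · subst hv; simp
  · rw [if_neg hv]
    obtain ⟨i, hi⟩ := Function.ne_iff.mp hv
    exact Finset.prod_eq_zero (Finset.mem_univ i) (if_neg hi)

end StmtAux

lemma aux_hyper {F : Type*} [Field F] [Fintype F] [DecidableEq F] {n : ℕ}
    (u : Fin n → F) (j0 : Fin n) (hu : u j0 ≠ 0) (t : F) :
    (Finset.univ.filter (fun y : Fin n → F => (∑ j, y j * u j) + t = 0)).card ≤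
      Fintype.card F ^ (n - 1) := by
  classical
  have hinj : ∀ y ∈ Finset.univ.filter (fun y : Fin n → F => (∑ j, y j * u j) + t = 0),
      ∀ z ∈ Finset.univ.filter (fun y : Fin n → F => (∑ j, y j * u j) + t = 0),
      (fun (k : {k : Fin n // k ≠ j0}) => y k.1) = (fun k : {k : Fin n // k ≠ j0} => z k.1) →
      y = z := by
    intro y hy z hz hyz
    rw [Finset.mem_filter] at hy hz
    have hrest : ∀ k : Fin n, k ≠ j0 → y k = z k := fun k hk => congrFun hyz ⟨k, hk⟩
    have hsplit : ∀ w : Fin n → F, w j0 * u j0 + ∑ j ∈ Finset.univ.erase j0, w j * u j =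
        ∑ j, w j * u j :=
      fun w => Finset.add_sum_erase _ (fun j => w j * u j) (Finset.mem_univ j0)
    have heq : ∑ j ∈ Finset.univ.erase j0, y j * u j = ∑ j ∈ Finset.univ.erase j0, z j * u j :=
      Finset.sum_congr rfl fun j hj => by
        rw [hrest j (Finset.mem_erase.mp hj).1]
    have h1 : y j0 * u j0 = z j0 * u j0 := by
      have e1 := hsplit y
      have e2 := hsplit z
      linear_combination hy.2 - hz.2 + e1 - e2 - heq
    funext k
    by_cases hk : k = j0
    · subst hk; exact mul_right_cancel₀ hu h1
    · exact hrest k hk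
  calc (Finset.univ.filter (fun y : Fin n → F => (∑ j, y j * u j) + t = 0)).card
      ≤ (Finset.univ : Finset ({k : Fin n // k ≠ j0} → F)).card :=
        Finset.card_le_card_of_injOn (fun y (k : {k : Fin n // k ≠ j0}) => y k.1)
          (fun y _ => Finset.mem_univ _) hinj
    _ = Fintype.card F ^ (n - 1) := by
        rw [Finset.card_univ, Fintype.card_fun]
        congr 1
        rw [Fintype.card_subtype_compl, Fintype.card_subtype_eq, Fintype.card_fin]

/-- `Sa y a i` is the value `⟨y, (a i).1⟩ + (a i).2`. -/
def Sa {F : Type*} [Field F] {n d : ℕ} (y : Fin n → F) (a : Fin d → (Fin n → F) × F)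
    (i : Fin d) : F :=
  (∑ j, y j * (a i).1 j) + (a i).2

/-- Number of common solutions `y` of the system `Sa y b i = Sa y a i`. -/
def Ncnt {F : Type*} [Field F] [Fintype F] [DecidableEq F] {n d : ℕ}
    (a b : Fin d → (Fin n → F) × F) : ℕ :=
  (Finset.univ.filter (fun y : Fin n → F => ∀ i, Sa y b i = Sa y a i)).card

lemma aux_N_diag {F : Type*} [Field F] [Fintype F] [DecidableEq F] {n d : ℕ}
    (a : Fin d → (Fin n → F) × F) : Ncnt a a = Fintype.card F ^ n := by
  unfold Ncnt
  rw [Finset.filter_true_of_mem (fun y _ => fun i => rfl), Finset.card_univ,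
    Fintype.card_fun, Fintype.card_fin]

lemma aux_N_off {F : Type*} [Field F] [Fintype F] [DecidableEq F] {n d : ℕ}
    {a b : Fin d → (Fin n → F) × F} (hab : a ≠ b) :
    Ncnt a b ≤ Fintype.card F ^ (n - 1) := by
  obtain ⟨i, hi⟩ := Function.ne_iff.mp hab
  by_cases h1 : (a i).1 = (b i).1
  · have h2 : (a i).2 ≠ (b i).2 := by
      intro h2
      exact hi (Prod.ext h1 h2)
    have hempty : (Finset.univ.filter
        (fun y : Fin n → F => ∀ i, Sa y b i = Sa y a i)) = ∅ := by
      rw [Finset.filter_eq_empty_iff]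
      intro y _ hcond
      have := hcond i
      unfold Sa at this
      rw [← h1] at this
      exact h2 ((add_right_inj _).mp this).symm
    unfold Ncnt
    rw [hempty]
    simp
  · obtain ⟨j0, hj0⟩ := Function.ne_iff.mp h1
    set u : Fin n → F := fun j => (b i).1 j - (a i).1 j with hu
    set t : F := (b i).2 - (a i).2 with ht
    have hsub : (Finset.univ.filter (fun y : Fin n → F => ∀ i, Sa y b i = Sa y a i)) ⊆
        (Finset.univ.filter (fun y : Fin n → F => (∑ j, y j * u j) + t = 0)) := by
      intro y hy
      rw [Finset.mem_filter] at hy ⊢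
      refine ⟨Finset.mem_univ _, ?_⟩
      have hci := hy.2 i
      unfold Sa at hci
      have hsum : ∑ j, y j * u j =
          (∑ j, y j * (b i).1 j) - ∑ j, y j * (a i).1 j := by
        rw [← Finset.sum_sub_distrib]
        exact Finset.sum_congr rfl fun j _ => by rw [hu]; ring
      rw [ht, hsum]
      linear_combination hci
    calc Ncnt a b ≤ (Finset.univ.filter
        (fun y : Fin n → F => (∑ j, y j * u j) + t = 0)).card := Finset.card_le_card hsub
      _ ≤ Fintype.card F ^ (n - 1) :=
        aux_hyper u j0 (by rw [hu]; exact sub_ne_zero.mpr (Ne.symm hj0)) t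

/-- The squared norm of the projection of the indicator vector of a set `V` of parameter
tuples onto the span of the normalized characters `χ_{(y,c)}/q^{d(n+1)/2}`, over all
`y ∈ F_q^n` and `c ∈ F_q^d \ {0}`, is at most
`(|V|/q^{(d-1)n})(1 − 1/q + |V|(q^{d-1}−1)/q^d)`. -/
theorem stmt_11 (p : ℕ) [Fact p.Prime] {F : Type*} [Field F] [Fintype F] [DecidableEq F]
    [Algebra (ZMod p) F] (n d : ℕ) (hn : 1 ≤ n) (hd : 1 ≤ d)
    (e : ZMod p → ℂ) (he : ∀ x : ZMod p, e x = Complex.exp (2 * Real.pi * Complex.I * x.val / p))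
    (χ : (Fin n → F) → (Fin d → F) → (Fin d → (Fin n → F) × F) → ℂ)
    (hχ : ∀ y c a, χ y c a =
      e (Algebra.trace (ZMod p) F (∑ i, c i * ((∑ j, y j * (a i).1 j) + (a i).2))))
    (V : Finset (Fin d → (Fin n → F) × F)) :
    ∑ y : Fin n → F, ∑ c ∈ Finset.univ.filter (fun c : Fin d → F => c ≠ 0),
        ‖∑ a ∈ V, (starRingEnd ℂ) (χ y c a)‖ ^ 2 / (Fintype.card F : ℝ) ^ (d * (n + 1))
      ≤ (V.card / (Fintype.card F : ℝ) ^ ((d - 1) * n)) *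
          (1 - 1 / (Fintype.card F : ℝ)
            + V.card * ((Fintype.card F : ℝ) ^ (d - 1) - 1) / (Fintype.card F : ℝ) ^ d) := by
  have hχ' : ∀ y c a, χ y c a = e (Algebra.trace (ZMod p) F (∑ i, c i * Sa y a i)) := hχ
  set Q : ℝ := (Fintype.card F : ℝ) with hQdef
  have hQ1 : 1 ≤ Fintype.card F := Fintype.card_pos
  have hQ : (0 : ℝ) < Q := by rw [hQdef]; exact_mod_cast (Fintype.card_pos : 0 < Fintype.card F)
  obtain ⟨d', rfl⟩ : ∃ d', d = d' + 1 := ⟨d - 1, by omega⟩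
  obtain ⟨n', rfl⟩ : ∃ n', n = n' + 1 := ⟨n - 1, by omega⟩
  simp only [Nat.add_sub_cancel]
  -- Step 1: expand the squared norm
  have step1 : ∀ (y : Fin (n'+1) → F) (c : Fin (d'+1) → F),
      ‖∑ a ∈ V, (starRingEnd ℂ) (χ y c a)‖ ^ 2 =
        (∑ a ∈ V, ∑ b ∈ V, (starRingEnd ℂ) (χ y c a) * χ y c b).re := by
    intro y c
    set z : ℂ := ∑ a ∈ V, (starRingEnd ℂ) (χ y c a) with hz
    have hconj : (starRingEnd ℂ) z = ∑ b ∈ V, χ y c b := by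
      rw [hz, map_sum]
      exact Finset.sum_congr rfl fun b _ => Complex.conj_conj _
    have hzz : ∑ a ∈ V, ∑ b ∈ V, (starRingEnd ℂ) (χ y c a) * χ y c b
        = z * (starRingEnd ℂ) z := by
      rw [hconj, hz, Finset.sum_mul_sum]
    rw [hzz, Complex.mul_conj, Complex.ofReal_re, Complex.sq_norm]
  -- Step 2: character orthogonality
  have step2 : ∀ (y : Fin (n'+1) → F) (a b : Fin (d'+1) → (Fin (n'+1) → F) × F),
      ∑ c : Fin (d'+1) → F, (starRingEnd ℂ) (χ y c a) * χ y c b =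
        if (∀ i, Sa y b i = Sa y a i) then ((Fintype.card F : ℂ)) ^ (d'+1) else 0 := by
    intro y a b
    have hterm : ∀ c : Fin (d'+1) → F, (starRingEnd ℂ) (χ y c a) * χ y c b =
        e (Algebra.trace (ZMod p) F (∑ i, c i * (Sa y b i - Sa y a i))) := by
      intro c
      rw [hχ' y c a, hχ' y c b, aux_e_conj p e he, ← aux_e_add p e he]
      congr 1
      rw [← map_neg, ← map_add]
      congr 1
      simp only [mul_sub, Finset.sum_sub_distrib]
      ring
    rw [Finset.sum_congr rfl fun c _ => hterm c,
      aux_orth_vec p e he (d'+1) (fun i => Sa y b i - Sa y a i)]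
    exact if_congr (by simp [funext_iff, sub_eq_zero]) rfl rfl
  -- Step 3: full c-sum for fixed y
  have step3 : ∀ y : Fin (n'+1) → F,
      ∑ c : Fin (d'+1) → F, ‖∑ a ∈ V, (starRingEnd ℂ) (χ y c a)‖ ^ 2 =
      ∑ a ∈ V, ∑ b ∈ V, (if (∀ i, Sa y b i = Sa y a i) then Q ^ (d'+1) else (0:ℝ)) := by
    intro y
    rw [Finset.sum_congr rfl fun c _ => step1 y c, ← Complex.re_sum]
    rw [Finset.sum_comm]
    rw [show (∑ a ∈ V, ∑ c : Fin (d'+1) → F, ∑ b ∈ V, (starRingEnd ℂ) (χ y c a) * χ y c b)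
        = ∑ a ∈ V, ∑ b ∈ V,
            (if (∀ i, Sa y b i = Sa y a i) then ((Fintype.card F : ℂ)) ^ (d'+1) else 0) from
      Finset.sum_congr rfl fun a _ => by
        rw [Finset.sum_comm]
        exact Finset.sum_congr rfl fun b _ => step2 y a b]
    rw [Complex.re_sum]
    refine Finset.sum_congr rfl fun a _ => ?_
    rw [Complex.re_sum]
    refine Finset.sum_congr rfl fun b _ => ?_
    rw [apply_ite Complex.re, Complex.zero_re]
    refine if_congr Iff.rfl ?_ rfl
    rw [show ((Fintype.card F : ℂ)) ^ (d'+1) = (((Q ^ (d'+1) : ℝ)) : ℂ) by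
      rw [hQdef]; norm_cast]
    rw [Complex.ofReal_re]
  -- value at c = 0
  have hc0 : ∀ y : Fin (n'+1) → F,
      ‖∑ a ∈ V, (starRingEnd ℂ) (χ y 0 a)‖ ^ 2 = ((V.card : ℝ)) ^ 2 := by
    intro y
    have h1 : ∀ a ∈ V, (starRingEnd ℂ) (χ y 0 a) = 1 := by
      intro a _
      rw [hχ' y 0 a]
      simp [aux_e_zero p e he]
    rw [Finset.sum_congr rfl h1, Finset.sum_const, nsmul_eq_mul, mul_one, Complex.norm_natCast]
  set M : ℕ := ∑ a ∈ V, ∑ b ∈ V, Ncnt a b with hM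
  -- LHS as a closed form
  have hLHSeq : (∑ y : Fin (n'+1) → F, ∑ c ∈ Finset.univ.filter (fun c : Fin (d'+1) → F => c ≠ 0),
      ‖∑ a ∈ V, (starRingEnd ℂ) (χ y c a)‖ ^ 2 / Q ^ ((d'+1) * ((n'+1) + 1)))
      = ((M : ℝ) * Q ^ (d'+1) - Q ^ (n'+1) * (V.card : ℝ) ^ 2) / Q ^ ((d'+1) * ((n'+1) + 1)) := by
    simp only [← Finset.sum_div]
    congr 1
    have hy : ∀ y : Fin (n'+1) → F,
        ∑ c ∈ Finset.univ.filter (fun c : Fin (d'+1) → F => c ≠ 0),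
          ‖∑ a ∈ V, (starRingEnd ℂ) (χ y c a)‖ ^ 2
        = (∑ c : Fin (d'+1) → F, ‖∑ a ∈ V, (starRingEnd ℂ) (χ y c a)‖ ^ 2)
            - ((V.card : ℝ)) ^ 2 := by
      intro y
      rw [Finset.filter_ne']
      have h2 : ‖∑ a ∈ V, (starRingEnd ℂ) (χ y 0 a)‖ ^ 2 +
          ∑ c ∈ Finset.univ.erase 0, ‖∑ a ∈ V, (starRingEnd ℂ) (χ y c a)‖ ^ 2 =
          ∑ c : Fin (d'+1) → F, ‖∑ a ∈ V, (starRingEnd ℂ) (χ y c a)‖ ^ 2 :=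
        Finset.add_sum_erase Finset.univ
          (fun c : Fin (d'+1) → F => ‖∑ a ∈ V, (starRingEnd ℂ) (χ y c a)‖ ^ 2) (Finset.mem_univ 0)
      rw [← hc0 y]
      linarith [h2]
    rw [Finset.sum_congr rfl fun y _ => hy y, Finset.sum_sub_distrib, Finset.sum_const,
      Finset.card_univ, nsmul_eq_mul]
    rw [Finset.sum_congr rfl fun y _ => step3 y]
    rw [Finset.sum_comm]
    rw [show (∑ a ∈ V, ∑ y : Fin (n'+1) → F, ∑ b ∈ V,
          (if (∀ i, Sa y b i = Sa y a i) then Q ^ (d'+1) else (0:ℝ)))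
        = ∑ a ∈ V, ∑ b ∈ V, (Ncnt a b : ℝ) * Q ^ (d'+1) from
      Finset.sum_congr rfl fun a _ => by
        rw [Finset.sum_comm]
        refine Finset.sum_congr rfl fun b _ => ?_
        rw [Finset.sum_ite, Finset.sum_const_zero, add_zero, Finset.sum_const, nsmul_eq_mul]
        rfl]
    have h3 : (∑ a ∈ V, ∑ b ∈ V, (Ncnt a b : ℝ) * Q ^ (d'+1)) = (M : ℝ) * Q ^ (d'+1) := by
      rw [hM]
      push_cast
      rw [Finset.sum_mul]
      exact Finset.sum_congr rfl fun a _ => by rw [Finset.sum_mul]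
    rw [h3]
    have h4 : ((Fintype.card (Fin (n'+1) → F) : ℝ)) = Q ^ (n'+1) := by
      rw [Fintype.card_fun, Fintype.card_fin, hQdef]
      push_cast
      ring
    rw [h4]
  rw [hLHSeq]
  -- bound on M
  have hMb : (M : ℝ) ≤ (V.card : ℝ) * Q ^ (n'+1) + ((V.card : ℝ) ^ 2 - V.card) * Q ^ n' := by
    have hnat : M ≤ V.card * (Fintype.card F ^ (n'+1) + (V.card - 1) * Fintype.card F ^ n') := by
      rw [hM]
      calc ∑ a ∈ V, ∑ b ∈ V, Ncnt a b
          ≤ ∑ _a ∈ V, (Fintype.card F ^ (n'+1) + (V.card - 1) * Fintype.card F ^ n') := by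
            refine Finset.sum_le_sum fun a ha => ?_
            rw [← Finset.add_sum_erase V (fun b => Ncnt a b) ha, aux_N_diag a]
            refine Nat.add_le_add_left ?_ _
            calc ∑ b ∈ V.erase a, Ncnt a b
                ≤ ∑ _b ∈ V.erase a, Fintype.card F ^ n' := by
                  refine Finset.sum_le_sum fun b hb => ?_
                  have := aux_N_off (Ne.symm (Finset.mem_erase.mp hb).1)
                  simpa using this
              _ = (V.card - 1) * Fintype.card F ^ n' := by
                  rw [Finset.sum_const, Finset.card_erase_of_mem ha, smul_eq_mul]
        _ = V.card * (Fintype.card F ^ (n'+1) + (V.card - 1) * Fintype.card F ^ n') := by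
            rw [Finset.sum_const, smul_eq_mul]
    rcases Nat.eq_zero_or_pos V.card with h0 | hpos
    · have hM0 : M = 0 := by
        rw [hM, Finset.card_eq_zero.mp h0]
        simp
      rw [hM0, h0]
      simp
    · have hcast := (Nat.cast_le (α := ℝ)).mpr hnat
      push_cast [Nat.cast_sub hpos] at hcast
      have hring : (V.card : ℝ) * (Q ^ (n'+1) + ((V.card : ℝ) - 1) * Q ^ n')
          = (V.card : ℝ) * Q ^ (n'+1) + ((V.card : ℝ) ^ 2 - V.card) * Q ^ n' := by ring
      rw [← hQdef] at hcast
      linarith [hcast, hring]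
  -- final algebra
  have hQ0 : Q ≠ 0 := ne_of_gt hQ
  have key : ((V.card : ℝ) / Q ^ (d' * (n'+1))) *
        (1 - 1/Q + (V.card : ℝ) * (Q ^ d' - 1) / Q ^ (d'+1))
      = (((V.card : ℝ) * Q ^ (n'+1) + ((V.card : ℝ) ^ 2 - V.card) * Q ^ n') * Q ^ (d'+1)
          - Q ^ (n'+1) * (V.card : ℝ) ^ 2) / Q ^ ((d'+1) * ((n'+1) + 1)) := by
    have E1 : Q ^ ((d'+1) * ((n'+1) + 1)) = Q ^ (d'*n') * Q ^ d' * Q ^ d' * Q ^ n' * Q ^ 2 := by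
      rw [show (d'+1) * ((n'+1) + 1) = d'*n' + d' + d' + n' + 2 by ring]
      rw [pow_add, pow_add, pow_add, pow_add]
    have E2 : Q ^ (d' * (n'+1)) = Q ^ (d'*n') * Q ^ d' := by
      rw [show d' * (n'+1) = d'*n' + d' by ring, pow_add]
    rw [E1, E2, pow_succ, pow_succ]
    field_simp
    ring
  rw [key]
  have hnum : (M : ℝ) * Q ^ (d'+1) - Q ^ (n'+1) * (V.card : ℝ) ^ 2
      ≤ ((V.card : ℝ) * Q ^ (n'+1) + ((V.card : ℝ) ^ 2 - V.card) * Q ^ n') * Q ^ (d'+1)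
          - Q ^ (n'+1) * (V.card : ℝ) ^ 2 := by
    have := mul_le_mul_of_nonneg_right hMb (le_of_lt (pow_pos hQ (d'+1)))
    linarith
  exact (div_le_div_iff_of_pos_right (pow_pos hQ _)).mpr hnum
end

section
/- (Main incidence bound, case d = 1.) Let P ⊆ F_q^{n+1} be a set of points and let V be a set of varieties of the form V_a = {(x, h(x) + Σ_j a_j x_j^{b_j} + a_{n+1}) : x ∈ F_q^n} for a ∈ F_q^{n+1}, where h ∈ F_q[x_1,...,x_n] is fixed of degree at most q−1 and gcd(b_j, q−1)=1 for all j. Then |I(P,V) − |P||V|/q| ≤ q^{n/2}(1 − 1/q)√(|P||V|), where I(P,V) = #{(p, W) ∈ P × V : p ∈ W}. -/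
open Finset

private lemma pow_inj' {F : Type*} [Field F] [Fintype F] {k : ℕ} (hb0 : 0 < k)
    (hc : Nat.Coprime k (Fintype.card F - 1)) : Function.Injective fun x : F => x ^ k := by
  classical
  intro x y hxy
  simp only at hxy
  have hcop : (Nat.card Fˣ).Coprime k := by
    rw [Nat.card_eq_fintype_card, Fintype.card_units]; exact hc.symm
  rcases eq_or_ne x 0 with rfl | hx
  · have : y ^ k = 0 := by rw [← hxy, zero_pow hb0.ne']
    exact ((pow_eq_zero_iff hb0.ne').mp this).symm
  · rcases eq_or_ne y 0 with rfl | hy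
    · have : x ^ k = 0 := by rw [hxy, zero_pow hb0.ne']
      exact absurd ((pow_eq_zero_iff hb0.ne').mp this) hx
    · have : powCoprime hcop (Units.mk0 x hx) = powCoprime hcop (Units.mk0 y hy) := by
        ext
        simpa [powCoprime] using hxy
      have := (powCoprime hcop).injective this
      simpa [Units.ext_iff] using this


private lemma count_lin {F : Type*} [Field F] [Fintype F] [DecidableEq F] {n : ℕ} {v : Fin n → F} (hv : v ≠ 0) (t : F) :
    ∑ α : Fin n → F, (if ∑ j, α j * v j = t then (1:ℝ) else 0)
      = (Fintype.card F : ℝ) ^ (n - 1) := by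
  classical
  obtain ⟨j₀, hj₀⟩ : ∃ j, v j ≠ 0 := by
    by_contra hc; push_neg at hc; exact hv (funext hc)
  rw [← Equiv.sum_comp (Equiv.funSplitAt j₀ F).symm, Fintype.sum_prod_type_right]
  have key : ∀ r : {j // j ≠ j₀} → F,
      (∑ x : F, if ∑ j, ((Equiv.funSplitAt j₀ F).symm (x, r)) j * v j = t then (1:ℝ) else 0) = 1 := by
    intro r
    set C : F := ∑ j ∈ univ.erase j₀, (if h : j = j₀ then (0:F) else r ⟨j, h⟩) * v j with hC
    have hsplit : ∀ x : F, (∑ j, ((Equiv.funSplitAt j₀ F).symm (x, r)) j * v j) = x * v j₀ + C := by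
      intro x
      rw [← Finset.add_sum_erase univ _ (mem_univ j₀)]
      congr 1
      · simp [Equiv.funSplitAt, Equiv.piSplitAt]
      · rw [hC]
        apply Finset.sum_congr rfl
        intro j hj
        have hjne : j ≠ j₀ := (Finset.mem_erase.mp hj).1
        simp [Equiv.funSplitAt, Equiv.piSplitAt, hjne]
    simp only [hsplit]
    have heq : ∀ x : F, (x * v j₀ + C = t) ↔ x = (t - C) / v j₀ := by
      intro x
      rw [eq_div_iff hj₀]
      constructor <;> intro hx <;> linear_combination hx
    simp only [heq]
    simp
  rw [Finset.sum_congr rfl fun r _ => key r, Finset.sum_const, card_univ]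
  have : Fintype.card ({j // j ≠ j₀} → F) = Fintype.card F ^ (n - 1) := by
    rw [Fintype.card_fun, Fintype.card_subtype_compl, Fintype.card_subtype_eq, Fintype.card_fin]
  rw [this]
  simp

private lemma core {F : Type*} [Field F] [Fintype F] [DecidableEq F] {n : ℕ} (hn : 1 ≤ n)
    (u : ((Fin n → F) × F) → Fin n → F) (c : ((Fin n → F) × F) → F)
    (huinj : ∀ p p' : ((Fin n → F) × F), u p = u p' → c p = c p' → p = p')
    (P A' : Finset ((Fin n → F) × F)) :
    |(∑ p ∈ P, ∑ a ∈ A', (if a.2 = c p - ∑ j, a.1 j * u p j then (1:ℝ) else 0))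
      - P.card * A'.card / (Fintype.card F : ℝ)|
      ≤ Real.sqrt ((Fintype.card F : ℝ) ^ n) * (1 - 1 / (Fintype.card F : ℝ))
        * Real.sqrt (P.card * A'.card) := by
  classical
  set q : ℝ := (Fintype.card F : ℝ) with hq
  have hqpos : (0:ℝ) < q := by
    rw [hq]; exact_mod_cast Fintype.card_pos
  have hq0 : q ≠ 0 := hqpos.ne'
  have hq1 : (1:ℝ) ≤ q := by rw [hq]; exact_mod_cast Fintype.card_pos
  have hfrac : (0:ℝ) ≤ 1 - 1/q := by
    rw [sub_nonneg, div_le_one hqpos]; exact hq1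
  set e : ((Fin n → F) × F) → ((Fin n → F) × F) → ℝ :=
    fun p a => (if a.2 = c p - ∑ j, a.1 j * u p j then (1:ℝ) else 0) - 1/q with he
  -- fiberwise zero mean
  have hfiber : ∀ p α, ∑ β : F, e p (α, β) = 0 := by
    intro p α
    rw [he]
    simp only
    rw [Finset.sum_sub_distrib,
      Finset.sum_ite_eq' Finset.univ (c p - ∑ j, α j * u p j) (fun _ => (1:ℝ))]
    rw [Finset.sum_const, card_univ, nsmul_eq_mul, ← hq]
    field_simp
    simp
  -- beta-sum kernel
  have hbeta : ∀ B1 B2 : F, ∑ β : F,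
      ((if β = B1 then (1:ℝ) else 0) - 1/q) * ((if β = B2 then (1:ℝ) else 0) - 1/q)
      = (if B1 = B2 then (1:ℝ) else 0) - 1/q := by
    intro B1 B2
    rcases eq_or_ne B1 B2 with rfl | hne
    · have expand : ∀ β : F, ((if β = B1 then (1:ℝ) else 0) - 1/q) * ((if β = B1 then (1:ℝ) else 0) - 1/q)
          = (if β = B1 then (1 - 2/q : ℝ) else 0) + (1/q)^2 := by
        intro β; split_ifs <;> ring
      simp only [expand]
      rw [Finset.sum_add_distrib, Finset.sum_ite_eq' Finset.univ B1 (fun _ => (1 - 2/q : ℝ)),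
        Finset.sum_const, card_univ, nsmul_eq_mul, ← hq]
      simp only [mem_univ, if_true, eq_self_iff_true]
      field_simp
      ring
    · have expand : ∀ β : F, ((if β = B1 then (1:ℝ) else 0) - 1/q) * ((if β = B2 then (1:ℝ) else 0) - 1/q)
          = -(1/q) * (if β = B1 then (1:ℝ) else 0) + (-(1/q) * (if β = B2 then (1:ℝ) else 0) + (1/q)^2) := by
        intro β
        split_ifs with h1 h2
        · exact absurd (h1 ▸ h2) hne
        · ring
        · ring
        · ring
      simp only [expand]
      rw [Finset.sum_add_distrib, Finset.sum_add_distrib, ← Finset.mul_sum, ← Finset.mul_sum,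
        Finset.sum_ite_eq' Finset.univ B1 (fun _ => (1:ℝ)),
        Finset.sum_ite_eq' Finset.univ B2 (fun _ => (1:ℝ)),
        Finset.sum_const, card_univ, nsmul_eq_mul, ← hq, if_pos (mem_univ B1), if_pos (mem_univ B2),
        if_neg hne]
      field_simp
      ring
  -- kernel formula
  have hKform : ∀ p p', ∑ a : (Fin n → F) × F, e p a * e p' a
      = (∑ α : Fin n → F, (if (∑ j, α j * (u p j - u p' j)) = c p - c p' then (1:ℝ) else 0))
        - q^n / q := by
    intro p p'
    rw [Fintype.sum_prod_type]
    have h1 : ∀ α : Fin n → F, ∑ β : F, e p (α, β) * e p' (α, β)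
        = (if (∑ j, α j * (u p j - u p' j)) = c p - c p' then (1:ℝ) else 0) - 1/q := by
      intro α
      rw [he]
      simp only
      rw [hbeta (c p - ∑ j, α j * u p j) (c p' - ∑ j, α j * u p' j)]
      congr 1
      have hsum : (∑ j, α j * (u p j - u p' j)) = (∑ j, α j * u p j) - (∑ j, α j * u p' j) := by
        rw [← Finset.sum_sub_distrib]
        exact Finset.sum_congr rfl fun j _ => by ring
      apply if_congr _ rfl rfl
      rw [hsum]
      constructor <;> intro H <;> linear_combination -H
    rw [Finset.sum_congr rfl fun α _ => h1 α, Finset.sum_sub_distrib, Finset.sum_const, card_univ,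
      nsmul_eq_mul]
    have : (Fintype.card (Fin n → F) : ℝ) = q^n := by
      rw [Fintype.card_fun, Fintype.card_fin, hq]; push_cast; ring
    rw [this]
    ring
  have hKdiag : ∀ p, ∑ a : (Fin n → F) × F, e p a * e p a = q^n * (1 - 1/q) := by
    intro p
    rw [hKform]
    have : ∀ α : Fin n → F, (if (∑ j, α j * (u p j - u p j)) = c p - c p then (1:ℝ) else 0) = 1 := by
      intro α
      rw [if_pos]
      simp
    rw [Finset.sum_congr rfl fun α _ => this α, Finset.sum_const, card_univ, nsmul_eq_mul,
      mul_one]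
    have hcard : (Fintype.card (Fin n → F) : ℝ) = q^n := by
      rw [Fintype.card_fun, Fintype.card_fin, hq]; push_cast; ring
    rw [hcard]
    field_simp
  have hKoff : ∀ p p', p ≠ p' → ∑ a : (Fin n → F) × F, e p a * e p' a ≤ 0 := by
    intro p p' hne
    rw [hKform]
    rcases eq_or_ne (u p) (u p') with hu | hu
    · have hc : c p ≠ c p' := fun hcc => hne (huinj p p' hu hcc)
      have hz : ∀ α : Fin n → F,
          (if (∑ j, α j * (u p j - u p' j)) = c p - c p' then (1:ℝ) else 0) = 0 := by
        intro α
        rw [if_neg]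
        intro H
        apply hc
        rw [hu] at H
        simp only [sub_self, mul_zero, Finset.sum_const_zero] at H
        have := H.symm
        rwa [sub_eq_zero] at this
      rw [Finset.sum_congr rfl fun α _ => hz α, Finset.sum_const_zero, zero_sub, neg_nonpos]
      positivity
    · have hv : (fun j => u p j - u p' j) ≠ 0 := by
        intro h0
        apply hu
        funext j
        have := congrFun h0 j
        simpa [sub_eq_zero] using this
      rw [count_lin hv (c p - c p'), ← hq]
      have : q ^ n / q = q ^ (n - 1) := by
        obtain ⟨m, rfl⟩ : ∃ m, n = m + 1 := ⟨n - 1, (Nat.succ_pred_eq_of_pos hn).symm⟩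
        rw [pow_succ]
        field_simp
        simp
      rw [this, sub_self]
  -- bound on Σ f²
  set f : ((Fin n → F) × F) → ℝ := fun a => ∑ p ∈ P, e p a with hf
  have hsumf : ∑ a : (Fin n → F) × F, f a ^ 2 ≤ q^n * (1 - 1/q) * P.card := by
    have hexp : ∀ a, f a ^ 2 = ∑ p ∈ P, ∑ p' ∈ P, e p a * e p' a := by
      intro a; rw [hf]; simp only; rw [sq, Finset.sum_mul_sum]
    calc ∑ a : (Fin n → F) × F, f a ^ 2
        = ∑ p ∈ P, ∑ p' ∈ P, ∑ a : (Fin n → F) × F, e p a * e p' a := by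
          rw [Finset.sum_congr rfl fun a _ => hexp a, Finset.sum_comm]
          exact Finset.sum_congr rfl fun p _ => Finset.sum_comm
      _ ≤ ∑ p ∈ P, q^n * (1 - 1/q) := by
          apply Finset.sum_le_sum
          intro p hp
          rw [← Finset.add_sum_erase P _ hp, ← hKdiag p]
          have : ∑ p' ∈ P.erase p, ∑ a : (Fin n → F) × F, e p a * e p' a ≤ 0 :=
            Finset.sum_nonpos fun p' hp' => hKoff p p' (Finset.ne_of_mem_erase hp').symm
          linarith
      _ = q^n * (1 - 1/q) * P.card := by
          rw [Finset.sum_const, nsmul_eq_mul]; ring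
  -- fiber counts for A'
  set M : (Fin n → F) → ℕ := fun α => (Finset.univ.filter fun β : F => (α, β) ∈ A').card with hM
  set w : ((Fin n → F) × F) → ℝ := fun a => (if a ∈ A' then (1:ℝ) else 0) - (M a.1 : ℝ)/q with hw
  have hMsum : ∀ α, ∑ β : F, (if (α, β) ∈ A' then (1:ℝ) else 0) = (M α : ℝ) := by
    intro α
    rw [hM]
    simp [Finset.sum_boole]
  have hMtot : ∑ α : Fin n → F, (M α : ℝ) = A'.card := by
    rw [Finset.sum_congr rfl fun α _ => (hMsum α).symm]
    have hprod : ∑ a : (Fin n → F) × F, (if a ∈ A' then (1:ℝ) else 0)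
        = ∑ α : Fin n → F, ∑ β : F, (if (α, β) ∈ A' then (1:ℝ) else 0) := by
      rw [Fintype.sum_prod_type]
    rw [← hprod]
    simp [Finset.sum_ite_mem]
  have hsumw : ∑ a : (Fin n → F) × F, w a ^ 2 ≤ (1 - 1/q) * A'.card := by
    rw [Fintype.sum_prod_type]
    have inner : ∀ α, ∑ β : F, w (α, β) ^ 2 = (M α : ℝ) - (M α : ℝ)^2/q := by
      intro α
      have expand : ∀ β : F, w (α, β) ^ 2
          = (if (α, β) ∈ A' then (1:ℝ) else 0) - 2*((M α:ℝ)/q)*(if (α, β) ∈ A' then (1:ℝ) else 0)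
            + ((M α:ℝ)/q)^2 := by
        intro β; rw [hw]; simp only; split_ifs <;> ring
      rw [Finset.sum_congr rfl fun β _ => expand β, Finset.sum_add_distrib, Finset.sum_sub_distrib,
        hMsum, ← Finset.mul_sum, hMsum, Finset.sum_const, card_univ, nsmul_eq_mul, ← hq]
      field_simp
      ring
    rw [Finset.sum_congr rfl fun α _ => inner α]
    calc ∑ α : Fin n → F, ((M α : ℝ) - (M α : ℝ)^2/q)
        ≤ ∑ α : Fin n → F, (1 - 1/q) * (M α : ℝ) := by
          apply Finset.sum_le_sum
          intro α _
          have hMsq : (M α : ℝ) ≤ (M α : ℝ)^2 := by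
            exact_mod_cast Nat.le_self_pow two_ne_zero (M α)
          have h2 : (M α : ℝ)/q ≤ (M α : ℝ)^2/q := (div_le_div_iff_of_pos_right hqpos).mpr hMsq
          have h3 : (1 - 1/q) * (M α : ℝ) = (M α : ℝ) - (M α : ℝ)/q := by ring
          linarith
      _ = (1 - 1/q) * A'.card := by rw [← Finset.mul_sum, hMtot]
  -- S = ⟨f, w⟩
  have hSw : ∑ p ∈ P, ∑ a ∈ A', e p a = ∑ a : (Fin n → F) × F, f a * w a := by
    have h1 : ∑ a : (Fin n → F) × F, f a * w a
        = (∑ a : (Fin n → F) × F, f a * (if a ∈ A' then (1:ℝ) else 0))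
          - ∑ a : (Fin n → F) × F, f a * ((M a.1:ℝ)/q) := by
      rw [← Finset.sum_sub_distrib]
      apply Finset.sum_congr rfl
      intro a _
      rw [hw]; ring
    have h2 : ∑ a : (Fin n → F) × F, f a * (if a ∈ A' then (1:ℝ) else 0) = ∑ a ∈ A', f a := by
      simp [mul_ite, mul_one, mul_zero, Finset.sum_ite_mem]
    have h3 : ∑ a : (Fin n → F) × F, f a * ((M a.1:ℝ)/q) = 0 := by
      rw [Fintype.sum_prod_type]
      apply Finset.sum_eq_zero
      intro α _
      show ∑ β : F, f (α, β) * ((M α : ℝ)/q) = 0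
      rw [← Finset.sum_mul]
      have hz : ∑ β : F, f (α, β) = 0 := by
        rw [hf]
        simp only
        rw [Finset.sum_comm]
        exact Finset.sum_eq_zero fun p _ => hfiber p α
      rw [hz, zero_mul]
    rw [h1, h2, h3, sub_zero]
    try rw [Finset.sum_comm]
    try exact Finset.sum_congr rfl fun a _ => by rw [hf]
  -- conclusion
  have hS : (∑ p ∈ P, ∑ a ∈ A', (if a.2 = c p - ∑ j, a.1 j * u p j then (1:ℝ) else 0))
      - P.card * A'.card / q = ∑ p ∈ P, ∑ a ∈ A', e p a := by
    have hsplit : ∑ p ∈ P, ∑ a ∈ A', e p a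
        = (∑ p ∈ P, ∑ a ∈ A', (if a.2 = c p - ∑ j, a.1 j * u p j then (1:ℝ) else 0))
          - ∑ p ∈ P, ∑ _a ∈ A', (1:ℝ)/q := by
      rw [← Finset.sum_sub_distrib]
      apply Finset.sum_congr rfl; intro p _
      rw [← Finset.sum_sub_distrib]
      try apply Finset.sum_congr rfl; intro a _
      try rw [he]
    rw [hsplit]
    simp only [Finset.sum_const, nsmul_eq_mul]
    ring
  rw [hS]
  have hCS := Finset.sum_mul_sq_le_sq_mul_sq Finset.univ f w
  have hsq : (∑ p ∈ P, ∑ a ∈ A', e p a)^2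
      ≤ (q^n * (1-1/q) * P.card) * ((1-1/q) * A'.card) := by
    rw [hSw]
    refine hCS.trans ?_
    have h1 : (0:ℝ) ≤ ∑ a : (Fin n → F) × F, w a ^ 2 :=
      Finset.sum_nonneg fun a _ => sq_nonneg _
    have h2 : (0:ℝ) ≤ q^n * (1-1/q) * P.card := by positivity
    exact mul_le_mul hsumf hsumw h1 h2
  calc |∑ p ∈ P, ∑ a ∈ A', e p a|
      = Real.sqrt ((∑ p ∈ P, ∑ a ∈ A', e p a)^2) := (Real.sqrt_sq_eq_abs _).symm
    _ ≤ Real.sqrt ((q^n * (1-1/q) * P.card) * ((1-1/q) * A'.card)) := Real.sqrt_le_sqrt hsq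
    _ = Real.sqrt (q^n) * (1 - 1/q) * Real.sqrt ((P.card : ℝ) * A'.card) := by
        rw [show (q^n * (1-1/q) * (P.card:ℝ)) * ((1-1/q) * A'.card)
            = (q^n) * (((1-1/q)*(1-1/q)) * ((P.card:ℝ) * A'.card)) by ring]
        rw [Real.sqrt_mul (by positivity), Real.sqrt_mul (mul_self_nonneg _),
          Real.sqrt_mul_self hfrac]
        ring


/-- Main incidence bound, case `d = 1`:
`|I(P,V) − |P||V|/q| ≤ q^{n/2}(1 − 1/q)√(|P||V|)` for a point set `P ⊆ F_q^{n+1}` and a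
set `V` of varieties of the form `V_a = {(x, h(x) + Σ_j a_j x_j^{b_j} + a_{n+1})}`. -/
theorem stmt_13 {F : Type*} [Field F] [Fintype F] (n : ℕ) (hn : 1 ≤ n)
    (h : MvPolynomial (Fin n) F) (hdeg : h.totalDegree ≤ Fintype.card F - 1)
    (b : Fin n → ℕ) (hb : ∀ j, 0 < b j ∧ Nat.Coprime (b j) (Fintype.card F - 1))
    (P : Finset ((Fin n → F) × F))
    (𝒱 : Finset (Set ((Fin n → F) × F)))
    (h𝒱 : ∀ W ∈ 𝒱, ∃ a : (Fin n → F) × F,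
      W = {pt : (Fin n → F) × F | pt.2 =
        MvPolynomial.eval pt.1 h + (∑ j, a.1 j * pt.1 j ^ (b j)) + a.2}) :
    |(Nat.card {x : ((Fin n → F) × F) × Set ((Fin n → F) × F) //
        x.1 ∈ P ∧ x.2 ∈ 𝒱 ∧ x.1 ∈ x.2} : ℝ)
      - P.card * 𝒱.card / (Fintype.card F : ℝ)|
      ≤ Real.sqrt ((Fintype.card F : ℝ) ^ n) * (1 - 1 / (Fintype.card F : ℝ))
        * Real.sqrt (P.card * 𝒱.card) := by
  classical
  set Vset : (Fin n → F) × F → Set ((Fin n → F) × F) := fun a =>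
    {pt | pt.2 = MvPolynomial.eval pt.1 h + (∑ j, a.1 j * pt.1 j ^ (b j)) + a.2} with hVset
  have hVinj : Function.Injective Vset := by
    intro a a' haa
    have key : ∀ x : Fin n → F,
        (∑ j, a.1 j * x j ^ (b j)) + a.2 = (∑ j, a'.1 j * x j ^ (b j)) + a'.2 := by
      intro x
      have hx : (x, MvPolynomial.eval x h + (∑ j, a.1 j * x j ^ (b j)) + a.2) ∈ Vset a := by
        simp [hVset]
      rw [haa] at hx
      simp only [hVset, Set.mem_setOf_eq] at hx
      linear_combination hx
    have hzero : ∀ w : Fin n → F, ∑ j, w j * ((0:Fin n → F)) j ^ (b j) = 0 :=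
      fun w => Finset.sum_eq_zero fun j _ => by
        simp [zero_pow (hb j).1.ne']
    have h2 : a.2 = a'.2 := by
      have := key 0
      rwa [hzero, hzero, zero_add, zero_add] at this
    have h1 : a.1 = a'.1 := by
      funext k
      have := key (Pi.single k 1)
      rw [h2] at this
      have h3 : (∑ j, a.1 j * (Pi.single k 1 : Fin n → F) j ^ (b j)) =
          (∑ j, a'.1 j * (Pi.single k 1 : Fin n → F) j ^ (b j)) := by
        linear_combination this
      rw [Finset.sum_eq_single k, Finset.sum_eq_single k] at h3
      · simpa using h3
      · intro j _ hj
        simp [Pi.single_eq_of_ne hj, zero_pow (hb j).1.ne']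
      · simp
      · intro j _ hj
        simp [Pi.single_eq_of_ne hj, zero_pow (hb j).1.ne']
      · simp
    exact Prod.ext h1 h2
  set A' : Finset ((Fin n → F) × F) := 𝒱.preimage Vset (hVinj.injOn) with hA'
  have hVimg : A'.image Vset = 𝒱 := by
    rw [hA', Finset.image_preimage]
    apply Finset.filter_true_of_mem
    intro W hW
    obtain ⟨a, ha⟩ := h𝒱 W hW
    exact ⟨a, ha.symm⟩
  have hcardA' : A'.card = 𝒱.card := by
    rw [← hVimg, Finset.card_image_of_injective _ hVinj]
  have hcount : (Nat.card {x : ((Fin n → F) × F) × Set ((Fin n → F) × F) //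
        x.1 ∈ P ∧ x.2 ∈ 𝒱 ∧ x.1 ∈ x.2} : ℝ)
      = ∑ p ∈ P, ∑ a ∈ A', (if p ∈ Vset a then (1:ℝ) else 0) := by
    have e1 : {x : ((Fin n → F) × F) × Set ((Fin n → F) × F) //
        x.1 ∈ P ∧ x.2 ∈ 𝒱 ∧ x.1 ∈ x.2}
        ≃ {x // x ∈ (P ×ˢ 𝒱).filter fun y => y.1 ∈ y.2} :=
      Equiv.subtypeEquivRight (by
        intro x
        simp only [Finset.mem_filter, Finset.mem_product]
        tauto)
    rw [Nat.card_congr e1, Nat.card_eq_finsetCard, Finset.card_filter, Finset.sum_product]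
    push_cast
    apply Finset.sum_congr rfl
    intro p _
    rw [← hVimg, Finset.sum_image (fun a _ a' _ haa => hVinj haa)]
  set uu : ((Fin n → F) × F) → Fin n → F := fun p j => p.1 j ^ b j with huu
  set cc : ((Fin n → F) × F) → F := fun p => p.2 - MvPolynomial.eval p.1 h with hcc
  have hmem : ∀ (p a : (Fin n → F) × F), (if p ∈ Vset a then (1:ℝ) else 0)
      = (if a.2 = cc p - ∑ j, a.1 j * uu p j then (1:ℝ) else 0) := by
    intro p a
    apply if_congr _ rfl rfl
    simp only [hVset, Set.mem_setOf_eq, hcc, huu]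
    constructor <;> intro H <;> linear_combination -H
  have hrw : ∑ p ∈ P, ∑ a ∈ A', (if p ∈ Vset a then (1:ℝ) else 0)
      = ∑ p ∈ P, ∑ a ∈ A', (if a.2 = cc p - ∑ j, a.1 j * uu p j then (1:ℝ) else 0) :=
    Finset.sum_congr rfl fun p _ => Finset.sum_congr rfl fun a _ => hmem p a
  have huinj : ∀ p p' : ((Fin n → F) × F), uu p = uu p' → cc p = cc p' → p = p' := by
    intro p p' h1 h2
    have hfst : p.1 = p'.1 := by
      funext j
      exact pow_inj' (hb j).1 (hb j).2 (congrFun h1 j)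
    apply Prod.ext hfst
    simp only [hcc] at h2
    rw [hfst] at h2
    linear_combination h2
  rw [hcount, hrw, ← hcardA']
  exact core hn uu cc huinj P A'
end

section
/- (Pinned distance set lower bound.) Let q be an odd prime power and P ⊆ F_q^n with |P| ≥ (√(1−ε)/ε)(q^{(n+1)/2} − q^{(n−1)/2}) for some 0 < ε < 1. Define Δ(P,y) = {Σ_{i=1}^n (x_i − y_i)^2 : x ∈ P}. Then (1/|P|) Σ_{y ∈ P} |Δ(P,y)| ≥ (1 − ε)q. -/
set_option maxHeartbeats 1000000

open Finset Complex

private lemma addChar_sum_eq_prod {A M : Type*} [AddCommMonoid A] [CommMonoid M]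
    (ψ : AddChar A M) {ι : Type*} (s : Finset ι) (g : ι → A) :
    ψ (∑ i ∈ s, g i) = ∏ i ∈ s, ψ (g i) := by
  classical
  induction s using Finset.induction_on with
  | empty => simp
  | insert _ _ h ih => rw [Finset.sum_insert h, Finset.prod_insert h, AddChar.map_add_eq_mul, ih]

private lemma count_bound {F : Type*} [Field F] [Fintype F] [DecidableEq F]
    (hodd : Odd (Fintype.card F)) (n : ℕ) (P : Finset (Fin n → F)) :
    (Fintype.card F : ℝ) *
      ∑ y ∈ P, ∑ x ∈ P, ∑ x' ∈ P,
        (if (∑ i, (x i - y i) ^ 2) = (∑ i, (x' i - y i) ^ 2) then (1:ℝ) else 0)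
    ≤ (P.card : ℝ) ^ 3 + ((Fintype.card F : ℝ) - 1) * (Fintype.card F : ℝ) ^ n * P.card := by
  classical
  set q := Fintype.card F with hq
  have hq1 : 1 ≤ q := Fintype.card_pos
  have hchar : 0 < ringChar F :=
    Nat.pos_of_ne_zero (CharP.ringChar_ne_zero_of_finite F)
  have hchar2 : ringChar F ≠ 2 := by
    intro h
    have h1 := FiniteField.even_card_iff_char_two.mp h
    have h2 := Nat.odd_iff.mp hodd
    omega
  have h2F : (2 : F) ≠ 0 := Ring.two_ne_zero hchar2
  set ψ := AddChar.FiniteField.primitiveChar_to_Complex F with hψdef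
  have hψ : ψ.IsPrimitive := AddChar.FiniteField.primitiveChar_to_Complex_isPrimitive F
  have hconj : ∀ a : F, (starRingEnd ℂ) (ψ a) = ψ (-a) := fun a => by
    rw [AddChar.starComp_apply hchar, AddChar.inv_apply]
  set d : (Fin n → F) → (Fin n → F) → F := fun x y => ∑ i, (x i - y i) ^ 2 with hd
  set f : F → (Fin n → F) → ℂ := fun s y => ∑ x ∈ P, ψ (s * d x y) with hf
  have key : ∀ a b : F, (if a = b then (q : ℂ) else 0) = ∑ s : F, ψ (s * (a - b)) := by
    intro a b
    rw [AddChar.sum_mulShift _ hψ]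
    simp [sub_eq_zero, eq_comm]
    rfl
  -- conj of f
  have hconjf : ∀ s y, (starRingEnd ℂ) (f s y) = ∑ x ∈ P, ψ (-(s * d x y)) := by
    intro s y
    rw [hf]
    simp only [map_sum, hconj]
  have expand : ∀ s y, f s y * (starRingEnd ℂ) (f s y)
      = ∑ x ∈ P, ∑ x' ∈ P, ψ (s * (d x y - d x' y)) := by
    intro s y
    rw [hconjf, hf, Finset.sum_mul_sum]
    refine Finset.sum_congr rfl fun x _ => Finset.sum_congr rfl fun x' _ => ?_
    rw [← AddChar.map_add_eq_mul]
    ring_nf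
  -- main complex identity
  have main : ∑ s : F, ∑ y ∈ P, f s y * (starRingEnd ℂ) (f s y)
      = (q : ℂ) * (∑ y ∈ P, ∑ x ∈ P, ∑ x' ∈ P,
        (if d x y = d x' y then (1:ℂ) else 0)) := by
    rw [Finset.sum_comm, Finset.mul_sum]
    refine Finset.sum_congr rfl fun y _ => ?_
    simp_rw [expand]
    rw [Finset.sum_comm, Finset.mul_sum]
    refine Finset.sum_congr rfl fun x _ => ?_
    rw [Finset.sum_comm, Finset.mul_sum]
    refine Finset.sum_congr rfl fun x' _ => ?_
    rw [← key]
    split_ifs <;> simp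
  -- orthogonality over the vector space, for s ≠ 0 and fixed x x'
  have ortho : ∀ (s : F), s ≠ 0 → ∀ x x' : Fin n → F,
      ∑ y : Fin n → F, ψ (s * (d x y - d x' y))
        = if x = x' then ((q : ℂ)) ^ n else 0 := by
    intro s hs x x'
    have hdecomp : ∀ y : Fin n → F, s * (d x y - d x' y)
        = ∑ i, (s * ((x i) ^ 2 - (x' i) ^ 2) + (2 * s * (x' i - x i)) * y i) := by
      intro y
      rw [hd]
      simp only [← Finset.sum_sub_distrib, Finset.mul_sum]
      exact Finset.sum_congr rfl fun i _ => by ring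
    simp_rw [hdecomp, addChar_sum_eq_prod]
    rw [← Fintype.piFinset_univ, Finset.sum_prod_piFinset univ (fun i t => ψ (s * ((x i) ^ 2 - (x' i) ^ 2) + 2 * s * (x' i - x i) * t))]
    have factor : ∀ i : Fin n, ∑ t : F, ψ (s * ((x i) ^ 2 - (x' i) ^ 2) + 2 * s * (x' i - x i) * t)
        = ψ (s * ((x i) ^ 2 - (x' i) ^ 2)) * (if 2 * s * (x' i - x i) = 0 then (q : ℂ) else 0) := by
      intro i
      have h := AddChar.sum_mulShift (ψ := ψ) (2 * s * (x' i - x i)) hψ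
      calc ∑ t : F, ψ (s * ((x i) ^ 2 - (x' i) ^ 2) + 2 * s * (x' i - x i) * t)
          = ∑ t : F, ψ (s * ((x i) ^ 2 - (x' i) ^ 2)) * ψ (t * (2 * s * (x' i - x i))) := by
            refine Finset.sum_congr rfl fun t _ => ?_
            rw [← AddChar.map_add_eq_mul, mul_comm t (2 * s * (x' i - x i))]
        _ = ψ (s * ((x i) ^ 2 - (x' i) ^ 2)) * ∑ t : F, ψ (t * (2 * s * (x' i - x i))) := by
            rw [Finset.mul_sum]
        _ = ψ (s * ((x i) ^ 2 - (x' i) ^ 2)) * (if 2 * s * (x' i - x i) = 0 then (q : ℂ) else 0) := by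
            rw [h]
            norm_cast
    simp_rw [factor]
    by_cases hxx : x = x'
    · subst hxx
      simp
    · obtain ⟨i, hi⟩ : ∃ i, x i ≠ x' i := by
        by_contra hcon
        push_neg at hcon
        exact hxx (funext hcon)
      rw [if_neg hxx]
      apply Finset.prod_eq_zero (Finset.mem_univ i)
      rw [if_neg, mul_zero]
      exact mul_ne_zero (mul_ne_zero h2F hs) (sub_ne_zero.mpr (Ne.symm hi))
  -- for s ≠ 0, the full sum of normSq over all y
  have bound_s : ∀ s : F, s ≠ 0 →
      ∑ y : Fin n → F, Complex.normSq (f s y) = (q : ℝ) ^ n * P.card := by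
    intro s hs
    have hcplx : ∑ y : Fin n → F, (Complex.normSq (f s y) : ℂ) = (q : ℂ) ^ n * P.card := by
      simp_rw [← Complex.mul_conj]
      simp_rw [expand s]
      rw [Finset.sum_comm]
      have : ∀ x ∈ P, ∑ y : Fin n → F, ∑ x' ∈ P, ψ (s * (d x y - d x' y))
          = (q : ℂ) ^ n := by
        intro x hx
        rw [Finset.sum_comm]
        simp_rw [fun x' => ortho s hs x x']
        rw [Finset.sum_ite_eq P x (fun _ => ((q : ℂ)) ^ n), if_pos hx]
      rw [Finset.sum_congr rfl this, Finset.sum_const, nsmul_eq_mul, mul_comm]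
    exact_mod_cast hcplx
  -- assembly
  set Tr : ℝ := ∑ y ∈ P, ∑ x ∈ P, ∑ x' ∈ P,
      (if d x y = d x' y then (1:ℝ) else 0) with hTr
  set E : ℝ := ∑ s ∈ Finset.univ.erase (0 : F), ∑ y ∈ P, Complex.normSq (f s y) with hE
  have hsplit : ∑ s : F, ∑ y ∈ P, f s y * (starRingEnd ℂ) (f s y)
      = (E : ℂ) + (P.card : ℂ) ^ 3 := by
    rw [← Finset.sum_erase_add _ _ (Finset.mem_univ (0 : F))]
    congr 1
    · rw [hE]
      push_cast
      refine Finset.sum_congr rfl fun s _ => Finset.sum_congr rfl fun y _ => ?_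
      rw [Complex.mul_conj]
    · have hf0 : ∀ y : Fin n → F, f 0 y = (P.card : ℂ) := by
        intro y
        rw [hf]
        simp
      simp only [hf0, map_natCast]
      rw [Finset.sum_const, nsmul_eq_mul]
      ring
  have hreal : (q : ℝ) * Tr = E + (P.card : ℝ) ^ 3 := by
    have hcast : ((Tr : ℝ) : ℂ)
        = ∑ y ∈ P, ∑ x ∈ P, ∑ x' ∈ P, (if d x y = d x' y then (1:ℂ) else 0) := by
      rw [hTr]
      push_cast [apply_ite (Complex.ofReal)]
      rfl
    have : ((q : ℝ) * Tr : ℝ) = ((E + (P.card : ℝ) ^ 3 : ℝ)) := by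
      have := main.symm.trans hsplit
      rw [← hcast] at this
      exact_mod_cast this
    exact this
  have hEbound : E ≤ ((q : ℝ) - 1) * (q : ℝ) ^ n * P.card := by
    have hstep : ∀ s ∈ Finset.univ.erase (0 : F),
        ∑ y ∈ P, Complex.normSq (f s y) ≤ (q : ℝ) ^ n * P.card := by
      intro s hs
      rw [← bound_s s (Finset.ne_of_mem_erase hs)]
      exact Finset.sum_le_sum_of_subset_of_nonneg (Finset.subset_univ P)
        (fun y _ _ => Complex.normSq_nonneg _)
    calc E ≤ ∑ _s ∈ Finset.univ.erase (0 : F), (q : ℝ) ^ n * P.card :=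
          Finset.sum_le_sum hstep
      _ = ((q : ℝ) - 1) * (q : ℝ) ^ n * P.card := by
          rw [Finset.sum_const, nsmul_eq_mul, Finset.card_erase_of_mem (Finset.mem_univ _),
            Finset.card_univ]
          rw [Nat.cast_sub hq1]
          push_cast
          ring
  have : (q : ℝ) * Tr ≤ (P.card : ℝ) ^ 3 + ((q : ℝ) - 1) * (q : ℝ) ^ n * P.card := by
    rw [hreal]; linarith
  exact this


/-- Pinned distance set lower bound: if `q` is odd and
`|P| ≥ (√(1−ε)/ε)(q^{(n+1)/2} − q^{(n−1)/2})` then the average pinned distance set size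
over pins in `P` is at least `(1 − ε)q`. -/
theorem stmt_17 {F : Type*} [Field F] [Fintype F] [DecidableEq F]
    (hodd : Odd (Fintype.card F)) (n : ℕ) (hn : 1 ≤ n)
    (ε : ℝ) (hε : 0 < ε) (hε1 : ε < 1)
    (P : Finset (Fin n → F))
    (hP : (Real.sqrt (1 - ε) / ε) *
        (Real.sqrt ((Fintype.card F : ℝ) ^ (n + 1)) - Real.sqrt ((Fintype.card F : ℝ) ^ (n - 1)))
      ≤ P.card) :
    (1 - ε) * (Fintype.card F : ℝ)
      ≤ (∑ y ∈ P, ((P.image (fun x => ∑ i, (x i - y i) ^ 2)).card : ℝ)) / P.card := by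
  classical
  obtain ⟨k, rfl⟩ : ∃ k, n = k + 1 := ⟨n - 1, (Nat.succ_pred_eq_of_pos hn).symm⟩
  set Q : ℝ := (Fintype.card F : ℝ) with hQdef
  have hq2 : 2 ≤ Fintype.card F := Fintype.one_lt_card
  have hq3 : 3 ≤ Fintype.card F := by
    have := Nat.odd_iff.mp hodd
    omega
  have hQ1 : (1:ℝ) < Q := by
    rw [hQdef]
    exact_mod_cast lt_of_lt_of_le (by norm_num) hq3
  have hQ0 : (0:ℝ) < Q := by linarith
  have h1ε : (0:ℝ) < 1 - ε := by linarith
  -- P is nonempty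
  have hsq_pos : 0 < Real.sqrt (Q ^ (k + 1 + 1)) - Real.sqrt (Q ^ (k + 1 - 1)) := by
    have hlt : Q ^ (k + 1 - 1) < Q ^ (k + 1 + 1) := by
      apply pow_lt_pow_right₀ hQ1
      omega
    have := Real.sqrt_lt_sqrt (by positivity) hlt
    linarith
  have hcoef : 0 < Real.sqrt (1 - ε) / ε := div_pos (Real.sqrt_pos.mpr h1ε) hε
  have hm : 0 < (P.card : ℝ) := lt_of_lt_of_le (mul_pos hcoef hsq_pos) hP
  have hPne : P.Nonempty := Finset.card_pos.mp (by exact_mod_cast hm)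
  set d : (Fin (k+1) → F) → (Fin (k+1) → F) → F := fun x y => ∑ i, (x i - y i) ^ 2 with hd
  set S : (Fin (k+1) → F) → ℝ :=
    fun y => ∑ x ∈ P, ∑ x' ∈ P, (if d x y = d x' y then (1:ℝ) else 0) with hS
  have hS_nonneg : ∀ y, 0 ≤ S y := by
    intro y
    rw [hS]
    apply Finset.sum_nonneg
    intro x _
    apply Finset.sum_nonneg
    intro x' _
    positivity
  -- fiber decomposition of S
  have hS_eq : ∀ y, S y
      = ∑ t ∈ P.image (fun x => d x y), (((P.filter fun x => d x y = t).card : ℝ))^2 := by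
    intro y
    have h1 : S y = ∑ x ∈ P, (fun t => (((P.filter fun x' => t = d x' y).card : ℝ))) (d x y) := by
      rw [hS]
      exact Finset.sum_congr rfl fun x _ => by rw [Finset.sum_boole]
    rw [h1, Finset.sum_comp (fun t => (((P.filter fun x' => t = d x' y).card : ℝ)))
      (fun x => d x y)]
    refine Finset.sum_congr rfl fun t _ => ?_
    rw [nsmul_eq_mul]
    have hfe : (P.filter fun x' => t = d x' y) = (P.filter fun x => d x y = t) :=
      Finset.filter_congr fun x _ => eq_comm
    rw [hfe, sq]
  -- Cauchy-Schwarz per pin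
  have CS1 : ∀ y, ((P.card : ℝ))^2 ≤ ((P.image (fun x => d x y)).card : ℝ) * S y := by
    intro y
    have hν : ((P.card : ℕ) : ℝ)
        = ∑ t ∈ P.image (fun x => d x y), (((P.filter fun x => d x y = t).card : ℝ)) := by
      rw [Finset.card_eq_sum_card_image (fun x => d x y) P]
      push_cast
      rfl
    calc ((P.card : ℝ))^2
        = (∑ t ∈ P.image (fun x => d x y), (((P.filter fun x => d x y = t).card : ℝ)))^2 := by
          rw [← hν]
      _ ≤ ((P.image (fun x => d x y)).card : ℝ) *
          ∑ t ∈ P.image (fun x => d x y), (((P.filter fun x => d x y = t).card : ℝ))^2 :=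
          sq_sum_le_card_mul_sum_sq
      _ = ((P.image (fun x => d x y)).card : ℝ) * S y := by rw [hS_eq]
  set T : ℝ := ∑ y ∈ P, S y with hT
  have hT_nonneg : 0 ≤ T := Finset.sum_nonneg fun y _ => hS_nonneg y
  set Dl : ℝ := ∑ y ∈ P, ((P.image fun x => d x y).card : ℝ) with hDl
  have hDl_nonneg : 0 ≤ Dl := Finset.sum_nonneg fun y _ => by positivity
  -- Cauchy-Schwarz over pins: card^4 ≤ Dl * T
  have h4 : ((P.card : ℝ))^4 ≤ Dl * T := by
    have hab : ∀ y ∈ P, (P.card : ℝ) ≤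
        Real.sqrt ((P.image fun x => d x y).card : ℝ) * Real.sqrt (S y) := by
      intro y _
      rw [← Real.sqrt_mul (by positivity)]
      calc (P.card : ℝ) = Real.sqrt (((P.card : ℝ))^2) := by
            rw [Real.sqrt_sq (by positivity)]
        _ ≤ Real.sqrt (((P.image fun x => d x y).card : ℝ) * S y) :=
            Real.sqrt_le_sqrt (CS1 y)
    have hsum : ((P.card : ℝ))^2 ≤
        ∑ y ∈ P, Real.sqrt ((P.image fun x => d x y).card : ℝ) * Real.sqrt (S y) := by
      calc ((P.card : ℝ))^2 = ∑ _y ∈ P, (P.card : ℝ) := by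
            rw [Finset.sum_const, nsmul_eq_mul, sq]
        _ ≤ _ := Finset.sum_le_sum hab
    have hCS := Finset.sum_mul_sq_le_sq_mul_sq P
      (fun y => Real.sqrt ((P.image fun x => d x y).card : ℝ))
      (fun y => Real.sqrt (S y))
    have hsq1 : ∀ y ∈ P, (Real.sqrt ((P.image fun x => d x y).card : ℝ))^2
        = ((P.image fun x => d x y).card : ℝ) := fun y _ => Real.sq_sqrt (by positivity)
    have hsq2 : ∀ y ∈ P, (Real.sqrt (S y))^2 = S y := fun y _ => Real.sq_sqrt (hS_nonneg y)
    rw [Finset.sum_congr rfl hsq1, Finset.sum_congr rfl hsq2] at hCS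
    calc ((P.card : ℝ))^4 = (((P.card : ℝ))^2)^2 := by ring
      _ ≤ (∑ y ∈ P, Real.sqrt ((P.image fun x => d x y).card : ℝ) * Real.sqrt (S y))^2 := by
          apply pow_le_pow_left₀ (sq_nonneg _) hsum
      _ ≤ Dl * T := hCS
  have hT_pos : 0 < T := by
    rcases lt_or_ge 0 T with h | h
    · exact h
    · exfalso
      have : Dl * T ≤ 0 := mul_nonpos_of_nonneg_of_nonpos hDl_nonneg h
      nlinarith [pow_pos hm 4]
  -- the character sum bound
  have hcount : Q * T ≤ ((P.card : ℝ))^3 + (Q - 1) * Q^(k+1) * P.card :=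
    count_bound hodd (k+1) P
  -- final arithmetic
  rw [le_div_iff₀ hm]
  have hgoal : (1 - ε) * Q * (P.card : ℝ) ≤ Dl → (1 - ε) * Q * (P.card : ℝ) ≤
      (∑ y ∈ P, ((P.image fun x => ∑ i, (x i - y i) ^ 2).card : ℝ)) := fun h => h
  apply hgoal
  by_cases hcase : (1 - ε) * Q ≤ 1
  · -- trivial case : the target is at most 1
    have hD1 : (P.card : ℝ) ≤ Dl := by
      rw [hDl]
      calc (P.card : ℝ) = ∑ _y ∈ P, (1:ℝ) := by
            rw [Finset.sum_const, nsmul_eq_mul, mul_one]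
        _ ≤ _ := by
            refine Finset.sum_le_sum fun y _ => ?_
            have himg : (P.image fun x => d x y).Nonempty := hPne.image _
            exact_mod_cast Finset.card_pos.mpr himg
    calc (1 - ε) * Q * (P.card : ℝ) ≤ 1 * (P.card : ℝ) :=
          mul_le_mul_of_nonneg_right hcase hm.le
      _ = (P.card : ℝ) := one_mul _
      _ ≤ Dl := hD1
  · push_neg at hcase
    have hεQ : ε * Q ≤ Q - 1 := by nlinarith
    -- squared lower bound on |P|
    have hm2 : (1 - ε) * Q ^ k * (Q - 1)^2 ≤ ε^2 * ((P.card : ℝ))^2 := by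
      have hsqrt2 : Real.sqrt (Q ^ (k + 1 + 1)) = Q * Real.sqrt (Q ^ k) := by
        rw [show Q ^ (k + 1 + 1) = Q^2 * Q^k by ring, Real.sqrt_mul (by positivity),
          Real.sqrt_sq hQ0.le]
      have hsimp : (k + 1 - 1) = k := by omega
      have hL : (Real.sqrt (1 - ε) / ε) * (Real.sqrt (Q ^ k) * (Q - 1)) ≤ (P.card : ℝ) := by
        have := hP
        rw [hsimp, hsqrt2] at this
        calc (Real.sqrt (1 - ε) / ε) * (Real.sqrt (Q ^ k) * (Q - 1))
            = (Real.sqrt (1 - ε) / ε) * (Q * Real.sqrt (Q ^ k) - Real.sqrt (Q ^ k)) := by ring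
          _ ≤ _ := this
      have hL0 : 0 ≤ (Real.sqrt (1 - ε) / ε) * (Real.sqrt (Q ^ k) * (Q - 1)) := by
        apply mul_nonneg hcoef.le
        apply mul_nonneg (Real.sqrt_nonneg _) (by linarith)
      have hLsq := mul_le_mul hL hL hL0 hm.le
      have he1 : (Real.sqrt (1 - ε) / ε) * (Real.sqrt (Q ^ k) * (Q - 1)) *
          ((Real.sqrt (1 - ε) / ε) * (Real.sqrt (Q ^ k) * (Q - 1)))
          = (Real.sqrt (1 - ε))^2 * (Real.sqrt (Q ^ k))^2 * (Q - 1)^2 / ε^2 := by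
        ring
      rw [he1, Real.sq_sqrt h1ε.le, Real.sq_sqrt (by positivity : (0:ℝ) ≤ Q ^ k)] at hLsq
      rw [div_le_iff₀ (by positivity : (0:ℝ) < ε^2)] at hLsq
      calc (1 - ε) * Q ^ k * (Q - 1)^2 = (1 - ε) * Q ^ k * (Q - 1) ^ 2 := by ring
        _ ≤ (P.card : ℝ) * (P.card : ℝ) * ε ^ 2 := hLsq
        _ = ε^2 * ((P.card : ℝ))^2 := by ring
    -- key polynomial inequality
    have key2 : (1 - ε) * (Q - 1) * Q^(k+1) ≤ ε * ((P.card : ℝ))^2 := by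
      have e2 : (ε * Q) * (ε * (1 - ε) * (Q - 1) * Q^k)
          ≤ (Q - 1) * (ε * (1 - ε) * (Q - 1) * Q^k) := by
        apply mul_le_mul_of_nonneg_right hεQ
        have : (0:ℝ) < Q - 1 := by linarith
        positivity
      have e4 : ε * ((1 - ε) * Q ^ k * (Q - 1)^2) ≤ ε * (ε^2 * ((P.card : ℝ))^2) :=
        mul_le_mul_of_nonneg_left hm2 hε.le
      have echain : ε^2 * ((1 - ε) * (Q - 1) * Q^(k+1)) ≤ ε^2 * (ε * ((P.card : ℝ))^2) := by
        calc ε^2 * ((1 - ε) * (Q - 1) * Q^(k+1))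
            = (ε * Q) * (ε * (1 - ε) * (Q - 1) * Q^k) := by ring
          _ ≤ (Q - 1) * (ε * (1 - ε) * (Q - 1) * Q^k) := e2
          _ = ε * ((1 - ε) * Q ^ k * (Q - 1)^2) := by ring
          _ ≤ ε * (ε^2 * ((P.card : ℝ))^2) := e4
          _ = ε^2 * (ε * ((P.card : ℝ))^2) := by ring
      exact le_of_mul_le_mul_left echain (by positivity)
    -- main inequality
    have s3 : (1 - ε) * (Q - 1) * Q^(k+1) * ((P.card : ℝ))^2
        ≤ ε * ((P.card : ℝ))^2 * ((P.card : ℝ))^2 :=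
      mul_le_mul_of_nonneg_right key2 (sq_nonneg _)
    have main_ineq : (1 - ε) * Q * (P.card : ℝ) * T ≤ ((P.card : ℝ))^4 := by
      calc (1 - ε) * Q * (P.card : ℝ) * T = (1 - ε) * (P.card : ℝ) * (Q * T) := by ring
        _ ≤ (1 - ε) * (P.card : ℝ) * (((P.card : ℝ))^3 + (Q - 1) * Q^(k+1) * P.card) := by
            apply mul_le_mul_of_nonneg_left hcount
            positivity
        _ ≤ ((P.card : ℝ))^4 := by nlinarith [s3]
    have hDT : (1 - ε) * Q * (P.card : ℝ) * T ≤ Dl * T := le_trans main_ineq h4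
    have : (1 - ε) * Q * (P.card : ℝ) ≤ Dl := le_of_mul_le_mul_right hDT hT_pos
    exact this
end
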